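/- arXiv:1108.3625 — 2 statements merged into one kernel-verified Lean document; each statement's English description precedes it below -/
import Mathlib

section
/- The class BSL of bounded semilinear languages is closed under concatenation: if L₁, L₂ ⊆ Σ* are both in BSL, then L₁·L₂ = {uv | u ∈ L₁, v ∈ L₂} is in BSL. -/
open scoped Classical

noncomputable section

/-! ### Basic word and language notions -/

/-- Number of occurrences of `b` in the list `l`. -/
def countOcc {β : Type} (l : List β) (b : β) : ℕ :=
  (l.filter fun s => decide (s = b)).length

/-- `wpow w k` is the word `w` concatenated with itself `k` times. -/
def wpow {β : Type} (w : List β) : ℕ → List β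
  | 0 => []
  | k + 1 => w ++ wpow w k

/-- The word `w₁^{k₁} ⋯ wₙ^{kₙ}`. -/
def socProd {β : Type} {n : ℕ} (w : Fin n → List β) (k : Fin n → ℕ) : List β :=
  (List.ofFn fun i => wpow (w i) (k i)).flatten

/-- `w₁, …, wₙ` is a socle of `L`: the `wᵢ` are nonempty and `L ⊆ w₁* ⋯ wₙ*`. -/
def IsSocle {β : Type} {n : ℕ} (L : Set (List β)) (w : Fin n → List β) : Prop :=
  (∀ i, w i ≠ []) ∧ ∀ x ∈ L, ∃ k : Fin n → ℕ, x = socProd w k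

/-- A language is bounded if it has a socle. -/
def BoundedLang {β : Type} (L : Set (List β)) : Prop :=
  ∃ (n : ℕ) (w : Fin n → List β), 0 < n ∧ IsSocle L w

/-- The iteration set of `L` w.r.t. the socle `w`. -/
def IterSet {β : Type} {n : ℕ} (L : Set (List β)) (w : Fin n → List β) :
    Set (Fin n → ℕ) :=
  {k | socProd w k ∈ L}

/-- Concatenation of two languages. -/
def catLang {β : Type} (X Y : Set (List β)) : Set (List β) :=
  {w | ∃ x ∈ X, ∃ y ∈ Y, w = x ++ y}

/-- The language `z* = {z^k | k ∈ ℕ}` of powers of a single word. -/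
def starWord {β : Type} (z : List β) : Set (List β) :=
  {w | ∃ k : ℕ, w = wpow z k}

/-- Kleene star of a language. -/
def starLang {β : Type} (K : Set (List β)) : Set (List β) :=
  {w | ∃ l : List (List β), (∀ u ∈ l, u ∈ K) ∧ w = l.flatten}

/-! ### Semilinear sets -/

/-- `C ⊆ ℕ^ι` is linear: `C = c + P*` for a finite `P`. -/
def IsLinearSetNat {ι : Type} (C : Set (ι → ℕ)) : Prop :=
  ∃ (c : ι → ℕ) (P : Set (ι → ℕ)), P.Finite ∧
    C = {x | ∃ p ∈ AddSubmonoid.closure P, x = c + p}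

/-- `C ⊆ ℕ^ι` is semilinear: a finite union of linear sets. -/
def IsSemilinearSetNat {ι : Type} (C : Set (ι → ℕ)) : Prop :=
  ∃ S : Set (Set (ι → ℕ)), S.Finite ∧ (∀ D ∈ S, IsLinearSetNat D) ∧ C = ⋃₀ S

/-- `L` is a bounded semilinear language: it has a socle whose iteration set is
semilinear. -/
def InBSL {β : Type} (L : Set (List β)) : Prop :=
  ∃ (n : ℕ) (w : Fin n → List β), 0 < n ∧ IsSocle L w ∧ IsSemilinearSetNat (IterSet L w)

/-! ### Finite automata, paths, runs -/

/-- A (nondeterministic) finite automaton with a single initial state, a set of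
final states and a finite set of transitions. -/
structure FinAut (α : Type) where
  σ : Type
  [finσ : Fintype σ]
  init : σ
  accept : Set σ
  δ : Set (σ × α × σ)
  finδ : δ.Finite

namespace FinAut

variable {α : Type}

/-- The type of transitions of `A`. -/
def Trans (A : FinAut α) : Type := {t : A.σ × α × A.σ // t ∈ A.δ}

def src {A : FinAut α} (t : A.Trans) : A.σ := t.1.1
def lbl {A : FinAut α} (t : A.Trans) : α := t.1.2.1
def tgt {A : FinAut α} (t : A.Trans) : A.σ := t.1.2.2

/-- `A.Steps q π r` holds when `π` is a path from state `q` to state `r`. -/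
inductive Steps (A : FinAut α) : A.σ → List A.Trans → A.σ → Prop
  | nil (q : A.σ) : Steps A q [] q
  | cons {q r : A.σ} {t : A.Trans} {π : List A.Trans} :
      src t = q → Steps A (tgt t) π r → Steps A q (t :: π) r

/-- The set of accepting paths of `A`, as a language over the transition set. -/
def Run (A : FinAut α) : Set (List A.Trans) :=
  {π | ∃ f ∈ A.accept, A.Steps A.init π f}

/-- The language of `A`: labels of accepting paths. -/
def lang (A : FinAut α) : Set (List α) :=
  {w | ∃ π ∈ A.Run, w = π.map lbl}

/-- `A` is deterministic. -/
def Deterministic (A : FinAut α) : Prop :=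
  ∀ ⦃p : A.σ⦄ ⦃a : α⦄ ⦃q q' : A.σ⦄, (p, a, q) ∈ A.δ → (p, a, q') ∈ A.δ → q = q'

/-- The Parikh image of a path: how many times each transition occurs. -/
def pathCount {A : FinAut α} (π : List A.Trans) : A.Trans → ℕ :=
  fun t => countOcc π t

/-- `A` is flat: it consists of a spine of states `q 0, …, q n` (`q 0` initial,
`q n` final, exactly one transition from `q i` to `q (i+1)` given by the label
`sl i`), together with, for at most one pair `lo k ≤ hi k` each, a back-path of
fresh states from `q (hi k)` to `q (lo k)`; the endpoints of distinct
back-paths are not strictly inside one another (no nested loops). -/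
def Flat (A : FinAut α) : Prop :=
  ∃ (n : ℕ) (q : Fin (n + 1) → A.σ) (sl : Fin n → α) (m : ℕ)
    (lo hi : Fin m → Fin (n + 1)) (fresh : Fin m → List A.σ) (bl : Fin m → List α),
    Function.Injective q ∧
    A.init = q 0 ∧
    A.accept = {q (Fin.last n)} ∧
    (∀ k, lo k ≤ hi k) ∧
    (∀ k k', k ≠ k' → (lo k, hi k) ≠ (lo k', hi k')) ∧
    (∀ k k', k ≠ k' →
      ¬(lo k < lo k' ∧ lo k' < hi k) ∧ ¬(lo k < hi k' ∧ hi k' < hi k)) ∧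
    (∀ k, (fresh k).Nodup) ∧
    (∀ k i, q i ∉ fresh k) ∧
    (∀ k k', k ≠ k' → ∀ s ∈ fresh k, s ∉ fresh k') ∧
    (∀ s : A.σ, (∃ i, s = q i) ∨ ∃ k, s ∈ fresh k) ∧
    (∀ k, (bl k).length = (fresh k).length + 1) ∧
    A.δ = {t | (∃ i : Fin n, t = (q i.castSucc, sl i, q i.succ)) ∨
        (∃ (k : Fin m) (j : ℕ) (s s' : A.σ) (a : α),
          (q (hi k) :: (fresh k ++ [q (lo k)]))[j]? = some s ∧
          (bl k)[j]? = some a ∧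
          (q (hi k) :: (fresh k ++ [q (lo k)]))[j + 1]? = some s' ∧
          t = (s, a, s'))}

end FinAut

/-! ### ε-automata -/

/-- The language of an ε-automaton (transitions labelled by `Option α`, where
`none` stands for ε): labels of accepting paths, erasing ε. -/
def epsLang {α : Type} (A : FinAut (Option α)) : Set (List α) :=
  {w | ∃ π ∈ A.Run, w = π.filterMap FinAut.lbl}

/-! ### Constrained automata -/

/-- The language of the constrained automaton `(A, C)`. -/
def CALang {α : Type} (A : FinAut α) (C : Set (A.Trans → ℕ)) : Set (List α) :=
  {w | ∃ π ∈ A.Run, FinAut.pathCount π ∈ C ∧ w = π.map FinAut.lbl}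

/-- The language of the ε-constrained automaton `(A, C)`. -/
def EpsCALang {α : Type} (A : FinAut (Option α)) (C : Set (A.Trans → ℕ)) :
    Set (List α) :=
  {w | ∃ π ∈ A.Run, FinAut.pathCount π ∈ C ∧ w = π.filterMap FinAut.lbl}

def RecByCA {α : Type} (L : Set (List α)) : Prop :=
  ∃ (A : FinAut α) (C : Set (A.Trans → ℕ)), IsSemilinearSetNat C ∧ CALang A C = L

def RecByDetCA {α : Type} (L : Set (List α)) : Prop :=
  ∃ (A : FinAut α) (C : Set (A.Trans → ℕ)),
    A.Deterministic ∧ IsSemilinearSetNat C ∧ CALang A C = L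

def RecByEpsCA {α : Type} (L : Set (List α)) : Prop :=
  ∃ (A : FinAut (Option α)) (C : Set (A.Trans → ℕ)),
    IsSemilinearSetNat C ∧ EpsCALang A C = L

/-- `L` is a finite union of languages of flat deterministic constrained
automata. -/
def FlatDetCAUnion {α : Type} (L : Set (List α)) : Prop :=
  ∃ (m : ℕ) (A : Fin m → FinAut α) (C : ∀ b, Set ((A b).Trans → ℕ)),
    (∀ b, (A b).Flat) ∧ (∀ b, (A b).Deterministic) ∧
    (∀ b, IsSemilinearSetNat (C b)) ∧ L = ⋃ b, CALang (A b) (C b)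

/-! ### Parikh automata -/

/-- Projection of a word over `Σ × ℕ^d` on `Σ`. -/
def PsiW {α : Type} {d : ℕ} (ω : List (α × (Fin d → ℕ))) : List α :=
  ω.map Prod.fst

/-- Extended Parikh image: the sum of the vector components. -/
def PhiTilde {α : Type} {d : ℕ} (ω : List (α × (Fin d → ℕ))) : Fin d → ℕ :=
  (ω.map Prod.snd).sum

/-- The language of the Parikh automaton `(A, C)`.  (Note that the set `D` of
vectors appearing on transitions of `A` is automatically finite, since the
transition set of `A` is finite.) -/
def PALang {α : Type} {d : ℕ} (A : FinAut (α × (Fin d → ℕ))) (C : Set (Fin d → ℕ)) :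
    Set (List α) :=
  {w | ∃ ω ∈ A.lang, PhiTilde ω ∈ C ∧ w = PsiW ω}

/-- Determinism for Parikh automata: at most one pair `(v, q')` for each state
`q` and letter `a`. -/
def PADet {α : Type} {d : ℕ} (A : FinAut (α × (Fin d → ℕ))) : Prop :=
  ∀ ⦃p : A.σ⦄ ⦃a : α⦄ ⦃v v' : Fin d → ℕ⦄ ⦃q q' : A.σ⦄,
    (p, (a, v), q) ∈ A.δ → (p, (a, v'), q') ∈ A.δ → v = v' ∧ q = q'

def RecByPA {α : Type} (L : Set (List α)) : Prop :=
  ∃ (d : ℕ) (A : FinAut (α × (Fin d → ℕ))) (C : Set (Fin d → ℕ)),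
    IsSemilinearSetNat C ∧ PALang A C = L

def RecByDetPA {α : Type} (L : Set (List α)) : Prop :=
  ∃ (d : ℕ) (A : FinAut (α × (Fin d → ℕ))) (C : Set (Fin d → ℕ)),
    PADet A ∧ IsSemilinearSetNat C ∧ PALang A C = L

/-! ### Affine Parikh automata -/

/-- Apply the affine functions `x ↦ M t * x + v t` of the transitions of a path,
in order (first transition first). -/
def pathApply {α : Type} {d : ℕ} (A : FinAut α) (M : A.Trans → Matrix (Fin d) (Fin d) ℕ)
    (v : A.Trans → Fin d → ℕ) : List A.Trans → (Fin d → ℕ) → (Fin d → ℕ)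
  | [], x => x
  | t :: π, x => pathApply A M v π ((M t).mulVec x + v t)

/-- The language of the affine Parikh automaton `(A, U, C)`, where the affine
function attached to transition `t` is `x ↦ M t * x + v t`. -/
def APALang {α : Type} {d : ℕ} (A : FinAut α) (M : A.Trans → Matrix (Fin d) (Fin d) ℕ)
    (v : A.Trans → Fin d → ℕ) (C : Set (Fin d → ℕ)) : Set (List α) :=
  {w | ∃ π ∈ A.Run, pathApply A M v π 0 ∈ C ∧ w = π.map FinAut.lbl}

/-- The monoid of the APA: the multiplicative matrix monoid generated by the
matrices of the transitions. -/
def APAMonoid {α : Type} {d : ℕ} (A : FinAut α) (M : A.Trans → Matrix (Fin d) (Fin d) ℕ) :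
    Set (Matrix (Fin d) (Fin d) ℕ) :=
  (Submonoid.closure (Set.range M) : Submonoid (Matrix (Fin d) (Fin d) ℕ))

/-! ### Semilinear regular expressions -/

/-- The language `y₀ x₁* y₁ ⋯ xₙ* yₙ` of a branch of an SLRE. -/
def branchLang {β : Type} {n : ℕ} (y : Fin (n + 1) → List β) (x : Fin n → List β) :
    Set (List β) :=
  {w | ∃ k : Fin n → ℕ,
    w = y 0 ++ (List.ofFn fun i : Fin n => wpow (x i) (k i) ++ y i.succ).flatten}

end

noncomputable section

section SemilinearCore

variable {ι κ : Type}

theorem IsLinearSetNat.isSemilinearSet {C : Set (ι → ℕ)} (h : IsLinearSetNat C) :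
    IsSemilinearSetNat C :=
  ⟨{C}, Set.finite_singleton _, by simpa using h, by simp⟩

theorem isSemilinearSet_empty : IsSemilinearSetNat (∅ : Set (ι → ℕ)) :=
  ⟨∅, Set.finite_empty, by simp, by simp⟩

theorem IsSemilinearSetNat.union {A B : Set (ι → ℕ)} (hA : IsSemilinearSetNat A)
    (hB : IsSemilinearSetNat B) : IsSemilinearSetNat (A ∪ B) := by
  obtain ⟨S, hS, hSl, rfl⟩ := hA
  obtain ⟨T, hT, hTl, rfl⟩ := hB
  exact ⟨S ∪ T, hS.union hT, fun D hD => hD.elim (hSl D) (hTl D),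
    by rw [Set.sUnion_union]⟩

theorem IsSemilinearSetNat.biUnion {γ : Type*} (s : Finset γ) {f : γ → Set (ι → ℕ)}
    (hf : ∀ i ∈ s, IsSemilinearSetNat (f i)) : IsSemilinearSetNat (⋃ i ∈ s, f i) := by
  classical
  induction s using Finset.induction with
  | empty => simpa using isSemilinearSet_empty
  | insert a s hx ih =>
    rw [Finset.set_biUnion_insert]
    exact (hf a (Finset.mem_insert_self a s)).union
      (ih fun i hi => hf i (Finset.mem_insert_of_mem hi))

/-- Membership in the closure of a finite set: finite ℕ-combination. -/
theorem mem_closure_finite_iff {P : Set (ι → ℕ)} (hP : P.Finite) {x : ι → ℕ} :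
    x ∈ AddSubmonoid.closure P ↔
      ∃ t : (ι → ℕ) → ℕ, x = ∑ p ∈ hP.toFinset, t p • p := by
  have h1 : (AddSubmonoid.closure P : Set (ι → ℕ)) =
      (Submodule.span ℕ P : Set (ι → ℕ)) := by
    rw [← Submodule.span_nat_eq_addSubmonoidClosure]; rfl
  have h2 : P = (hP.toFinset : Set (ι → ℕ)) := by simp
  constructor
  · intro hx
    have : x ∈ Submodule.span ℕ ((hP.toFinset : Finset (ι → ℕ)) : Set (ι → ℕ)) := by
      rw [← h2, ← SetLike.mem_coe, ← h1]; exact hx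
    obtain ⟨f, -, hf⟩ := Submodule.mem_span_finset.1 this
    exact ⟨f, hf.symm⟩
  · rintro ⟨t, rfl⟩
    exact sum_mem fun p hp =>
      nsmul_mem (AddSubmonoid.subset_closure (hP.mem_toFinset.1 hp)) _

theorem sum_smul_mem_closure {P : Set (ι → ℕ)} (hP : P.Finite) (t : (ι → ℕ) → ℕ) :
    ∑ p ∈ hP.toFinset, t p • p ∈ AddSubmonoid.closure P :=
  (mem_closure_finite_iff hP).2 ⟨t, rfl⟩

/-- Image of a semilinear set under an additive monoid hom. -/
theorem IsSemilinearSetNat.image {A : Set (ι → ℕ)} (hA : IsSemilinearSetNat A)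
    (f : (ι → ℕ) →+ (κ → ℕ)) : IsSemilinearSetNat (f '' A) := by
  obtain ⟨S, hS, hSl, rfl⟩ := hA
  refine ⟨(fun D => f '' D) '' S, hS.image _, ?_, by simp [Set.sUnion_image, Set.image_sUnion]⟩
  rintro E ⟨D, hD, rfl⟩
  obtain ⟨c, P, hP, rfl⟩ := hSl D hD
  refine ⟨f c, f '' P, hP.image f, ?_⟩
  ext y
  simp only [Set.mem_image, Set.mem_setOf_eq]
  constructor
  · rintro ⟨x, ⟨p, hp, rfl⟩, rfl⟩
    exact ⟨f p, by rw [← AddMonoidHom.map_mclosure]; exact ⟨p, hp, rfl⟩, by rw [map_add]⟩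
  · rintro ⟨p', hp', rfl⟩
    rw [← AddMonoidHom.map_mclosure] at hp'
    obtain ⟨p, hp, rfl⟩ := hp'
    exact ⟨c + p, ⟨p, hp, rfl⟩, by rw [map_add]⟩

/-- Translate of a semilinear set. -/
theorem IsSemilinearSetNat.shift {A : Set (ι → ℕ)} (hA : IsSemilinearSetNat A) (v : ι → ℕ) :
    IsSemilinearSetNat ((fun x => v + x) '' A) := by
  obtain ⟨S, hS, hSl, rfl⟩ := hA
  refine ⟨(fun D => (fun x => v + x) '' D) '' S, hS.image _, ?_,
    by simp [Set.sUnion_image, Set.image_sUnion]⟩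
  rintro E ⟨D, hD, rfl⟩
  obtain ⟨c, P, hP, rfl⟩ := hSl D hD
  refine ⟨v + c, P, hP, ?_⟩
  ext y
  simp only [Set.mem_image, Set.mem_setOf_eq]
  constructor
  · rintro ⟨x, ⟨p, hp, rfl⟩, rfl⟩
    exact ⟨p, hp, by rw [add_assoc]⟩
  · rintro ⟨p, hp, rfl⟩
    exact ⟨c + p, ⟨p, hp, rfl⟩, by rw [add_assoc]⟩

end SemilinearCore

section Dickson

variable {ι : Type} [Fintype ι]

theorem exists_minimal_le {S : Set (ι → ℕ)} {x : ι → ℕ} (hx : x ∈ S) :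
    ∃ m ∈ S, (∀ y ∈ S, y ≤ m → y = m) ∧ m ≤ x := by
  classical
  suffices h : ∀ (n : ℕ) (x : ι → ℕ), x ∈ S → ∑ i, x i ≤ n →
      ∃ m ∈ S, (∀ y ∈ S, y ≤ m → y = m) ∧ m ≤ x by
    exact h (∑ i, x i) x hx le_rfl
  clear hx x
  intro n
  induction n using Nat.strong_induction_on with
  | _ n ih =>
  intro x hx hn
  by_cases h : ∀ y ∈ S, y ≤ x → y = x
  · exact ⟨x, hx, h, le_refl x⟩
  · push_neg at h
    obtain ⟨y, hy, hyx, hne⟩ := h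
    have hlt : ∑ i, y i < ∑ i, x i := by
      obtain ⟨i, hi⟩ : ∃ i, y i ≠ x i := by
        by_contra hc; push_neg at hc; exact hne (funext hc)
      exact Finset.sum_lt_sum (fun i _ => hyx i)
        ⟨i, Finset.mem_univ i, lt_of_le_of_ne (hyx i) hi⟩
    obtain ⟨m, hm, hmin, hle⟩ := ih (∑ i, y i) (lt_of_lt_of_le hlt hn) y hy le_rfl
    exact ⟨m, hm, hmin, hle.trans hyx⟩

theorem minimals_finite (S : Set (ι → ℕ)) :
    {m ∈ S | ∀ y ∈ S, y ≤ m → y = m}.Finite := by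
  have hpwo : Set.IsPWO {m ∈ S | ∀ y ∈ S, y ≤ m → y = m} :=
    Set.isPWO_of_wellQuasiOrderedLE _
  refine IsAntichain.finite_of_partiallyWellOrderedOn ?_ hpwo
  rintro a ⟨haS, ha⟩ b ⟨hbS, hb⟩ hne hab
  exact hne (hb a haS hab)

/-- The key structural lemma: sets with the difference property are semilinear. -/
theorem isSemilinearSet_of_diff (S : Set (ι → ℕ)) (M : AddSubmonoid (ι → ℕ))
    (hSM : ∀ s ∈ S, ∀ m ∈ M, s + m ∈ S)
    (hSdiff : ∀ s ∈ S, ∀ s' ∈ S, s' ≤ s → s - s' ∈ M)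
    (hMdiff : ∀ m ∈ (M : Set (ι → ℕ)), ∀ m' ∈ (M : Set (ι → ℕ)), m' ≤ m → m - m' ∈ M) :
    IsSemilinearSetNat S := by
  classical
  set MinS := {m ∈ S | ∀ y ∈ S, y ≤ m → y = m} with hMinS
  set Mmin := {m ∈ (M : Set (ι → ℕ)) \ {0} | ∀ y ∈ (M : Set (ι → ℕ)) \ {0}, y ≤ m → y = m}
    with hMmin
  have hMminfin : Mmin.Finite := minimals_finite _
  -- every element of M is in the closure of Mmin
  have hMgen : ∀ m ∈ M, m ∈ AddSubmonoid.closure Mmin := by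
    suffices h : ∀ (n : ℕ) (m : ι → ℕ), m ∈ M → ∑ i, m i ≤ n →
        m ∈ AddSubmonoid.closure Mmin by
      exact fun m hm => h (∑ i, m i) m hm le_rfl
    intro n
    induction n using Nat.strong_induction_on with
    | _ n ih =>
    intro m hm hn
    by_cases h0 : m = 0
    · subst h0; exact zero_mem _
    · have hm' : m ∈ (M : Set (ι → ℕ)) \ {0} := ⟨hm, h0⟩
      obtain ⟨g, hg, hgmin, hgle⟩ := exists_minimal_le hm'
      have hdm : m - g ∈ M := hMdiff m hm g hg.1 hgle
      have hrec : m = g + (m - g) := by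
        funext i
        exact (Nat.add_sub_cancel' (hgle i)).symm
      have hglt : ∑ i, (m - g) i < ∑ i, m i := by
        have hgne : g ≠ 0 := hg.2
        obtain ⟨i, hi⟩ : ∃ i, g i ≠ 0 := by
          by_contra hc; push_neg at hc; exact hgne (funext hc)
        refine Finset.sum_lt_sum (fun j _ => ?_) ⟨i, Finset.mem_univ i, ?_⟩
        · simp only [Pi.sub_apply]; omega
        · have h1 : g i ≤ m i := hgle i
          have h2 : (m - g) i = m i - g i := rfl
          omega
      have : (m - g) ∈ AddSubmonoid.closure Mmin :=
        ih (∑ i, (m - g) i) (lt_of_lt_of_le hglt hn) _ hdm le_rfl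
      rw [hrec]
      exact add_mem (AddSubmonoid.subset_closure ⟨hg, hgmin⟩) this
  -- S is the union over minimal elements of translates of closure Mmin
  refine ⟨(fun s₀ => {x | ∃ p ∈ AddSubmonoid.closure Mmin, x = s₀ + p}) '' MinS,
    (minimals_finite S).image _, ?_, ?_⟩
  · rintro D ⟨s₀, _, rfl⟩
    exact ⟨s₀, Mmin, hMminfin, rfl⟩
  · ext x
    rw [Set.sUnion_image]
    simp only [Set.mem_iUnion, Set.mem_setOf_eq]
    constructor
    · intro hx
      obtain ⟨m, hmS, hmin, hle⟩ := exists_minimal_le hx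
      refine ⟨m, ⟨hmS, hmin⟩, x - m, hMgen _ (hSdiff x hx m hmS hle), ?_⟩
      funext i
      exact (Nat.add_sub_cancel' (hle i)).symm
    · rintro ⟨s₀, hs₀, p, hp, rfl⟩
      have hpM : p ∈ M := by
        have : AddSubmonoid.closure Mmin ≤ M := by
          rw [AddSubmonoid.closure_le]
          exact fun y hy => hy.1.1
        exact this hp
      exact hSM s₀ hs₀.1 p hpM

/-- Solution sets of linear systems (equalities of `ℕ`-affine maps) are semilinear. -/
theorem isSemilinearSet_solutionSet {κ : Type} (f g : (ι → ℕ) →+ (κ → ℕ)) (c d : κ → ℕ) :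
    IsSemilinearSetNat {x | f x + c = g x + d} := by
  set M : AddSubmonoid (ι → ℕ) :=
    { carrier := {x | f x = g x}
      add_mem' := by
        intro a b ha hb
        simp only [Set.mem_setOf_eq, map_add] at *
        rw [ha, hb]
      zero_mem' := by simp } with hM
  have key : ∀ x y : ι → ℕ, y ≤ x → ∀ cx cy : κ → ℕ,
      f x + cx = g x + cy → f y + cx = g y + cy → f (x - y) = g (x - y) := by
    intro x y hle cx cy hx hy
    have hxy : x = y + (x - y) := by
      funext i; exact (Nat.add_sub_cancel' (hle i)).symm
    rw [hxy, map_add, map_add] at hx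
    funext k
    have h1 := congrFun hx k
    have h2 := congrFun hy k
    simp only [Pi.add_apply] at h1 h2 ⊢
    omega
  apply isSemilinearSet_of_diff _ M
  · intro s hs m hm
    simp only [Set.mem_setOf_eq, map_add] at *
    funext k
    have h1 := congrFun hs k
    have h2 := congrFun hm k
    simp only [Pi.add_apply] at h1 h2 ⊢
    omega
  · intro s hs s' hs' hle
    exact key s s' hle c d hs hs'
  · intro m hm m' hm' hle
    have h1 : f m + 0 = g m + 0 := by have hm2 : f m = g m := hm; simpa using hm2
    have h2 : f m' + 0 = g m' + 0 := by have hm2 : f m' = g m' := hm'; simpa using hm2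
    exact key m m' hle 0 0 h1 h2

end Dickson

section SemilinearOps

variable {ι κ : Type}

/-- Precomposition hom. -/
def precompHom (r : ι → κ) : (κ → ℕ) →+ (ι → ℕ) where
  toFun x := x ∘ r
  map_zero' := rfl
  map_add' _ _ := rfl

@[simp] theorem precompHom_apply (r : ι → κ) (x : κ → ℕ) : precompHom r x = x ∘ r := rfl

/-- The "sum of scaled generators" hom. -/
def gensHom {P : Set (ι → ℕ)} (hP : P.Finite) : ({p // p ∈ hP.toFinset} → ℕ) →+ (ι → ℕ) where
  toFun w := ∑ p : {p // p ∈ hP.toFinset}, w p • (p : ι → ℕ)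
  map_zero' := by simp
  map_add' a b := by
    simp only [Pi.add_apply, add_smul]
    exact Finset.sum_add_distrib

theorem gensHom_mem_closure {P : Set (ι → ℕ)} (hP : P.Finite) (w) :
    gensHom hP w ∈ AddSubmonoid.closure P := by
  refine sum_mem fun p _ => nsmul_mem (AddSubmonoid.subset_closure ?_) _
  exact hP.mem_toFinset.1 p.2

theorem exists_gensHom_eq {P : Set (ι → ℕ)} (hP : P.Finite) {p : ι → ℕ}
    (hp : p ∈ AddSubmonoid.closure P) : ∃ w, gensHom hP w = p := by
  obtain ⟨t, rfl⟩ := (mem_closure_finite_iff hP).1 hp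
  refine ⟨fun q => t q, ?_⟩
  rw [gensHom]
  simp only [AddMonoidHom.coe_mk, ZeroHom.coe_mk]
  rw [← Finset.sum_coe_sort hP.toFinset (fun q => t q • q)]

/-- Preimage of a semilinear set under an affine map. -/
theorem isSemilinearSet_affine_preimage [Fintype ι] {A : Set (κ → ℕ)}
    (hA : IsSemilinearSetNat A) (h : (ι → ℕ) →+ (κ → ℕ)) (c : κ → ℕ) :
    IsSemilinearSetNat {x | c + h x ∈ A} := by
  classical
  obtain ⟨S, hS, hSl, rfl⟩ := hA
  have hrw : {x | c + h x ∈ ⋃₀ S} = ⋃ D ∈ hS.toFinset, {x | c + h x ∈ D} := by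
    ext x; simp
  rw [hrw]
  refine IsSemilinearSetNat.biUnion _ fun D hD => ?_
  obtain ⟨c', P, hP, rfl⟩ := hSl D (hS.mem_toFinset.1 hD)
  haveI : Fintype {p // p ∈ hP.toFinset} := FinsetCoe.fintype _
  set f : ((ι ⊕ {p // p ∈ hP.toFinset}) → ℕ) →+ (κ → ℕ) := h.comp (precompHom Sum.inl)
  set g : ((ι ⊕ {p // p ∈ hP.toFinset}) → ℕ) →+ (κ → ℕ) :=
    (gensHom hP).comp (precompHom Sum.inr)
  have key : {x | c + h x ∈ {y | ∃ p ∈ AddSubmonoid.closure P, y = c' + p}} =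
      (precompHom Sum.inl) '' {w | f w + c = g w + c'} := by
    ext x
    simp only [Set.mem_setOf_eq, Set.mem_image]
    constructor
    · rintro ⟨p, hp, hx⟩
      obtain ⟨w, hw⟩ := exists_gensHom_eq hP hp
      refine ⟨Sum.elim x w, ?_, rfl⟩
      show h (Sum.elim x w ∘ Sum.inl) + c = gensHom hP (Sum.elim x w ∘ Sum.inr) + c'
      have h1 : Sum.elim x w ∘ Sum.inl = x := rfl
      have h2 : Sum.elim x w ∘ Sum.inr = w := rfl
      rw [h1, h2, hw, add_comm (h x) c, hx, add_comm p c']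
    · rintro ⟨w, hw, rfl⟩
      refine ⟨gensHom hP (w ∘ Sum.inr), gensHom_mem_closure hP _, ?_⟩
      have : h (w ∘ Sum.inl) + c = gensHom hP (w ∘ Sum.inr) + c' := hw
      rw [add_comm c (h (precompHom Sum.inl w)), add_comm c' _]
      exact this
  rw [key]
  exact (isSemilinearSet_solutionSet f g c c').image _

/-- Intersection of semilinear sets. -/
theorem IsSemilinearSetNat.inter [Fintype ι] {A B : Set (ι → ℕ)}
    (hA : IsSemilinearSetNat A) (hB : IsSemilinearSetNat B) : IsSemilinearSetNat (A ∩ B) := by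
  classical
  obtain ⟨S, hS, hSl, rfl⟩ := hA
  have hrw : (⋃₀ S) ∩ B = ⋃ D ∈ hS.toFinset, (D ∩ B) := by
    ext x; simp [Set.mem_sUnion]; tauto
  rw [hrw]
  refine IsSemilinearSetNat.biUnion _ fun D hD => ?_
  obtain ⟨c, P, hP, rfl⟩ := hSl D (hS.mem_toFinset.1 hD)
  haveI : Fintype {p // p ∈ hP.toFinset} := FinsetCoe.fintype _
  have key : {y | ∃ p ∈ AddSubmonoid.closure P, y = c + p} ∩ B =
      (fun y => c + y) '' ((gensHom hP) '' {w | c + gensHom hP w ∈ B}) := by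
    ext y
    simp only [Set.mem_inter_iff, Set.mem_setOf_eq, Set.mem_image, exists_exists_and_eq_and]
    constructor
    · rintro ⟨⟨p, hp, rfl⟩, hyB⟩
      obtain ⟨w, hw⟩ := exists_gensHom_eq hP hp
      exact ⟨w, by rw [hw]; exact hyB, by rw [hw]⟩
    · rintro ⟨w, hwB, rfl⟩
      exact ⟨⟨gensHom hP w, gensHom_mem_closure hP w, rfl⟩, hwB⟩
  rw [key]
  exact ((isSemilinearSet_affine_preimage hB (gensHom hP) c).image _).shift c

theorem isSemilinearSet_univ [Fintype ι] : IsSemilinearSetNat (Set.univ : Set (ι → ℕ)) := by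
  have h := isSemilinearSet_solutionSet (ι := ι) (κ := ι) 0 0 0 0
  simpa using h

theorem isSemilinearSet_coordEq [Fintype ι] (a : ι) (n : ℕ) :
    IsSemilinearSetNat {x : ι → ℕ | x a = n} := by
  set f : (ι → ℕ) →+ (PUnit.{1} → ℕ) :=
    { toFun := fun x _ => x a
      map_zero' := rfl
      map_add' := fun _ _ => rfl }
  have h := isSemilinearSet_solutionSet f 0 0 (fun _ => n)
  have hrw : {x | f x + 0 = (0 : (ι → ℕ) →+ (PUnit.{1} → ℕ)) x + fun _ => n}
      = {x : ι → ℕ | x a = n} := by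
    ext x
    simp only [Set.mem_setOf_eq, add_zero, AddMonoidHom.zero_apply, zero_add]
    constructor
    · intro h'; exact congrFun h' PUnit.unit
    · intro h'; funext u; exact h'
  rwa [hrw] at h

end SemilinearOps

section WordLemmas

variable {β : Type}

theorem wpow_zero (w : List β) : wpow w 0 = [] := rfl

theorem wpow_succ (w : List β) (k : ℕ) : wpow w (k + 1) = w ++ wpow w k := rfl

theorem wpow_length (w : List β) (k : ℕ) : (wpow w k).length = k * w.length := by
  induction k with
  | zero => simp [wpow_zero]
  | succ k ih => simp [wpow_succ, ih, Nat.succ_mul]; omega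

theorem wpow_add (w : List β) (a b : ℕ) : wpow w (a + b) = wpow w a ++ wpow w b := by
  induction a with
  | zero => simp [wpow_zero]
  | succ a ih =>
    have : a + 1 + b = (a + b) + 1 := by omega
    rw [this, wpow_succ, wpow_succ, ih, List.append_assoc]

theorem wpow_eq_nil_iff {w : List β} (hw : w ≠ []) {k : ℕ} : wpow w k = [] ↔ k = 0 := by
  cases k with
  | zero => simp [wpow_zero]
  | succ k => simp [wpow_succ, hw]

theorem wpow_prefix (w : List β) {a b : ℕ} (h : a ≤ b) : wpow w a <+: wpow w b := by
  obtain ⟨c, rfl⟩ := Nat.exists_eq_add_of_le h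
  exact ⟨wpow w c, (wpow_add w a c).symm⟩

theorem prefix_append_left {x y : List β} (z : List β) (h : x <+: y) :
    z ++ x <+: z ++ y := by
  obtain ⟨t, rfl⟩ := h
  exact ⟨t, by rw [List.append_assoc]⟩

/-- Split an equation of appends at the boundary of the shorter left part. -/
theorem append_split {a b c d : List β} (h : a ++ b = c ++ d)
    (hlen : a.length ≤ c.length) :
    a = c.take a.length ∧ b = c.drop a.length ++ d := by
  constructor
  · have h1 : (a ++ b).take a.length = (c ++ d).take a.length := by rw [h]
    rwa [List.take_left, List.take_append_of_le_length hlen] at h1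
  · have h1 : (a ++ b).drop a.length = (c ++ d).drop a.length := by rw [h]
    rwa [List.drop_left, List.drop_append_of_le_length hlen] at h1

theorem append_split_converse {a b c d : List β} (ha : a = c.take a.length)
    (hb : b = c.drop a.length ++ d) : a ++ b = c ++ d := by
  set n := a.length with hn
  rw [hb, ← List.append_assoc]
  congr 1
  rw [ha]
  exact List.take_append_drop n c

/-- The suffix of `wpow v b` of length `t * |v| + r`. -/
theorem drop_wpow (v : List β) {b t r : ℕ} (hr : r < v.length)
    (hle : t * v.length + r ≤ b * v.length) :
    (wpow v b).drop (b * v.length - (t * v.length + r)) =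
      (if r = 0 then [] else v.drop (v.length - r)) ++ wpow v t := by
  have hvpos : 0 < v.length := by omega
  by_cases hr0 : r = 0
  · subst hr0
    have htb : t ≤ b := by
      by_contra hc
      push_neg at hc
      have : b * v.length < t * v.length := (Nat.mul_lt_mul_right hvpos).2 hc
      omega
    have hb' : b = (b - t) + t := by omega
    have h1 : b * v.length = (b - t) * v.length + t * v.length := by
      calc b * v.length = ((b - t) + t) * v.length := by rw [← hb']
      _ = (b - t) * v.length + t * v.length := by ring
    have hidx : b * v.length - (t * v.length + 0) = (wpow v (b - t)).length := by
      rw [wpow_length]; omega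
    have hsplit : wpow v b = wpow v (b - t) ++ wpow v t := by
      conv_lhs => rw [hb']
      rw [wpow_add]
    rw [hidx, hsplit, List.drop_left]
    simp
  · have htb : t < b := by
      by_contra hc
      push_neg at hc
      have : b * v.length ≤ t * v.length := Nat.mul_le_mul_right _ hc
      omega
    have hb2 : b = (b - t - 1) + (1 + t) := by omega
    have h1 : b * v.length = (b - t - 1) * v.length + v.length + t * v.length := by
      calc b * v.length = ((b - t - 1) + (1 + t)) * v.length := by rw [← hb2]
      _ = (b - t - 1) * v.length + v.length + t * v.length := by ring
    have hidx : b * v.length - (t * v.length + r) =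
        (wpow v (b - t - 1)).length + (v.length - r) := by
      rw [wpow_length]; omega
    have hw1 : wpow v 1 = v := by simp [wpow_succ, wpow_zero]
    have hsplit : wpow v b = wpow v (b - t - 1) ++ (v ++ wpow v t) := by
      conv_lhs => rw [hb2]
      rw [wpow_add, wpow_add, hw1]
    rw [if_neg hr0, hidx, hsplit, List.drop_append,
      List.drop_eq_nil_of_le (Nat.le_add_right _ _),
      Nat.add_sub_cancel_left, List.drop_append_of_le_length (by omega),
      List.nil_append]

theorem wpow_take_eq_of_prefix {u c : List β} {L : ℕ} (h : u <+: c) (hL : L ≤ u.length) :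
    u.take L = c.take L := by
  obtain ⟨t, rfl⟩ := h
  rw [List.take_append_of_le_length hL]

/-- Blocks from position `i` on. -/
def blocksFrom {p : ℕ} (w : Fin p → List β) (e : Fin p → ℕ) (i : ℕ) : List β :=
  ((List.ofFn fun t => wpow (w t) (e t)).drop i).flatten

theorem blocksFrom_zero {p : ℕ} (w : Fin p → List β) (e : Fin p → ℕ) :
    blocksFrom w e 0 = socProd w e := by
  simp [blocksFrom, socProd]

theorem blocksFrom_of_ge {p : ℕ} (w : Fin p → List β) (e : Fin p → ℕ) {i : ℕ}
    (h : p ≤ i) : blocksFrom w e i = [] := by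
  rw [blocksFrom, List.drop_eq_nil_of_le (by simpa using h)]
  rfl

theorem blocksFrom_succ {p : ℕ} (w : Fin p → List β) (e : Fin p → ℕ) {i : ℕ}
    (h : i < p) :
    blocksFrom w e i = wpow (w ⟨i, h⟩) (e ⟨i, h⟩) ++ blocksFrom w e (i + 1) := by
  rw [blocksFrom, blocksFrom]
  rw [List.drop_eq_getElem_cons (by simpa using h)]
  rw [List.flatten_cons]
  congr 1
  simp

theorem blocksFrom_congr {p : ℕ} (w : Fin p → List β) {e e' : Fin p → ℕ} {i : ℕ}
    (h : ∀ t : Fin p, i ≤ (t : ℕ) → e t = e' t) :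
    blocksFrom w e i = blocksFrom w e' i := by
  suffices H : ∀ (n i : ℕ), p - i ≤ n → (∀ t : Fin p, i ≤ (t : ℕ) → e t = e' t) →
      blocksFrom w e i = blocksFrom w e' i by
    exact H p i (by omega) h
  intro n
  induction n with
  | zero =>
    intro i hi _
    rw [blocksFrom_of_ge w e (by omega), blocksFrom_of_ge w e' (by omega)]
  | succ n ih =>
    intro i hi hee
    by_cases hip : i < p
    · rw [blocksFrom_succ w e hip, blocksFrom_succ w e' hip,
        hee ⟨i, hip⟩ (le_refl _), ih (i + 1) (by omega)
        (fun t ht => hee t (by omega))]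
    · rw [blocksFrom_of_ge w e (by omega), blocksFrom_of_ge w e' (by omega)]

theorem blocksFrom_eq_nil_iff {p : ℕ} {w : Fin p → List β} (hw : ∀ t, w t ≠ [])
    (e : Fin p → ℕ) (i : ℕ) :
    blocksFrom w e i = [] ↔ ∀ t : Fin p, i ≤ (t : ℕ) → e t = 0 := by
  suffices H : ∀ (n i : ℕ), p - i ≤ n →
      (blocksFrom w e i = [] ↔ ∀ t : Fin p, i ≤ (t : ℕ) → e t = 0) by
    exact H p i (by omega)
  intro n
  induction n with
  | zero =>
    intro i hi
    rw [blocksFrom_of_ge w e (by omega)]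
    simp only [true_iff]
    intro t ht
    have := t.2
    omega
  | succ n ih =>
    intro i hi
    by_cases hip : i < p
    · rw [blocksFrom_succ w e hip, List.append_eq_nil_iff,
        wpow_eq_nil_iff (hw _), ih (i + 1) (by omega)]
      constructor
      · rintro ⟨h0, hrest⟩ t ht
        by_cases hti : (t : ℕ) = i
        · have : t = ⟨i, hip⟩ := by
            apply Fin.ext; exact hti
          rw [this]; exact h0
        · exact hrest t (by omega)
      · intro hall
        exact ⟨hall _ (le_refl _), fun t ht => hall t (by omega)⟩
    · rw [blocksFrom_of_ge w e (by omega)]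
      simp only [true_iff]
      intro t ht
      have := t.2
      omega

/-- Dichotomy for downward-closed predicates on ℕ. -/
theorem downward_closed_dichotomy (P : ℕ → Prop)
    (hdc : ∀ m n, m ≤ n → P n → P m) :
    (∀ n, P n) ∨ ∃ N, ∀ n, P n ↔ n < N := by
  by_cases h : ∀ n, P n
  · exact Or.inl h
  · push_neg at h
    have hex : ∃ n, ¬ P n := h
    refine Or.inr ⟨Nat.find hex, fun n => ⟨fun hPn => ?_, fun hlt => ?_⟩⟩
    · by_contra hc
      push_neg at hc
      exact Nat.find_spec hex (hdc _ _ hc hPn)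
    · by_contra hc
      exact absurd (Nat.find_min hex hlt) (by simpa using hc)

end WordLemmas

section MoreHelpers

variable {ι κ : Type}

theorem isSemilinearSet_hom_preimage [Fintype ι] {A : Set (κ → ℕ)}
    (hA : IsSemilinearSetNat A) (h : (ι → ℕ) →+ (κ → ℕ)) :
    IsSemilinearSetNat {x | h x ∈ A} := by
  have h2 := isSemilinearSet_affine_preimage hA h 0
  have : {x | (0 : κ → ℕ) + h x ∈ A} = {x | h x ∈ A} := by
    ext x; simp
  rwa [this] at h2

theorem sum_if_mul [Fintype ι] [DecidableEq ι] (a : ι) (K : ℕ) (x : ι → ℕ) :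
    ∑ t, (if t = a then K else 0) * x t = K * x a := by
  rw [Finset.sum_eq_single a]
  · simp
  · intro b _ hb; simp [hb]
  · intro h; exact absurd (Finset.mem_univ a) h

/-- Solution sets of two-term affine equations are semilinear. -/
theorem isSemilinearSet_affineEq [Fintype ι] [DecidableEq ι]
    (a b c' d' : ι) (Ka Kb Kc Kd C D : ℕ) :
    IsSemilinearSetNat {x : ι → ℕ | x a * Ka + x b * Kb + C = x c' * Kc + x d' * Kd + D} := by
  set f : (ι → ℕ) →+ (PUnit.{1} → ℕ) :=
    { toFun := fun x _ => x a * Ka + x b * Kb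
      map_zero' := by funext; simp
      map_add' := fun s t => by funext; simp [Pi.add_apply]; ring }
  set g : (ι → ℕ) →+ (PUnit.{1} → ℕ) :=
    { toFun := fun x _ => x c' * Kc + x d' * Kd
      map_zero' := by funext; simp
      map_add' := fun s t => by funext; simp [Pi.add_apply]; ring }
  have h := isSemilinearSet_solutionSet f g (fun _ => C) (fun _ => D)
  have hrw : {x | f x + (fun _ => C) = g x + fun _ => D} =
      {x : ι → ℕ | x a * Ka + x b * Kb + C = x c' * Kc + x d' * Kd + D} := by
    ext x
    simp only [Set.mem_setOf_eq]
    constructor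
    · intro h'; exact congrFun h' PUnit.unit
    · intro h'; funext u; exact h'
  rwa [hrw] at h

theorem isSemilinearSet_coordDC [Fintype ι] (a : ι) (P : ℕ → Prop)
    (hdc : ∀ m n, m ≤ n → P n → P m) : IsSemilinearSetNat {x : ι → ℕ | P (x a)} := by
  classical
  rcases downward_closed_dichotomy P hdc with h | ⟨N, hN⟩
  · have : {x : ι → ℕ | P (x a)} = Set.univ := by ext x; simp [h _]
    rw [this]; exact isSemilinearSet_univ
  · have : {x : ι → ℕ | P (x a)} = ⋃ n ∈ Finset.range N, {x : ι → ℕ | x a = n} := by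
      ext x
      simp only [Set.mem_setOf_eq, Set.mem_iUnion, Finset.mem_range, hN]
      constructor
      · intro h'; exact ⟨x a, h', rfl⟩
      · rintro ⟨n, hn, rfl⟩; exact hn
    rw [this]
    exact IsSemilinearSetNat.biUnion _ fun n _ => isSemilinearSet_coordEq a n

/-- Update hom: replace coordinate `c₀` by the value of an extra variable `e₀`. -/
def updHom {E : Type} [DecidableEq ι] (c₀ : ι) (e₀ : E) : ((ι ⊕ E) → ℕ) →+ (ι → ℕ) where
  toFun w c := if c = c₀ then w (Sum.inr e₀) else w (Sum.inl c)
  map_zero' := by funext c; by_cases h : c = c₀ <;> simp [h]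
  map_add' a b := by funext c; by_cases h : c = c₀ <;> simp [h]

theorem updHom_apply {E : Type} [DecidableEq ι] (c₀ : ι) (e₀ : E) (w : (ι ⊕ E) → ℕ) (c : ι) :
    updHom c₀ e₀ w c = if c = c₀ then w (Sum.inr e₀) else w (Sum.inl c) := rfl

theorem mem_swap_image {γ δ : Type} (A : Set ((γ ⊕ δ) → ℕ)) (y : (δ ⊕ γ) → ℕ) :
    y ∈ (precompHom Sum.swap) '' A ↔ y ∘ Sum.swap ∈ A := by
  constructor
  · rintro ⟨w, hw, rfl⟩
    have : (precompHom Sum.swap w) ∘ Sum.swap = w := by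
      funext c; simp [precompHom_apply, Function.comp, Sum.swap_swap]
    rwa [this]
  · intro h
    exact ⟨y ∘ Sum.swap, h, by funext c; simp [precompHom_apply, Function.comp, Sum.swap_swap]⟩

end MoreHelpers

section GsetDef

variable {β : Type}

theorem prefix_of_exists_prefix {u z v : List β} {n b : ℕ}
    (h : ∃ c, wpow u n <+: z ++ wpow v c)
    (hlen : (wpow u n).length ≤ (z ++ wpow v b).length) :
    wpow u n <+: z ++ wpow v b := by
  obtain ⟨c, hc⟩ := h
  rcases le_total c b with hcb | hbc
  · exact hc.trans (prefix_append_left z (wpow_prefix v hcb))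
  · exact List.prefix_of_prefix_length_le hc
      (prefix_append_left z (wpow_prefix v hbc)) hlen

theorem prefix_of_exists_prefix' {u z v : List β} {c n : ℕ}
    (h : ∃ a, z ++ wpow v c <+: wpow u a)
    (hlen : (z ++ wpow v c).length ≤ (wpow u n).length) :
    z ++ wpow v c <+: wpow u n := by
  obtain ⟨a, ha⟩ := h
  rcases le_total a n with han | hna
  · exact ha.trans (wpow_prefix u han)
  · exact List.prefix_of_prefix_length_le ha (wpow_prefix u hna) hlen

/-- The central family of sets. -/
def Gset {p q : ℕ} (u : Fin p → List β) (v : Fin q → List β) (i j : ℕ) (z : List β) :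
    Set ((Fin p ⊕ Fin q) → ℕ) :=
  {x | blocksFrom u (fun t => x (Sum.inl t)) i = z ++ blocksFrom v (fun t => x (Sum.inr t)) j}

theorem mem_Gset {p q : ℕ} (u : Fin p → List β) (v : Fin q → List β) (i j : ℕ)
    (z : List β) (x : (Fin p ⊕ Fin q) → ℕ) :
    x ∈ Gset u v i j z ↔
      blocksFrom u (fun t => x (Sum.inl t)) i
        = z ++ blocksFrom v (fun t => x (Sum.inr t)) j := Iff.rfl

end GsetDef

section CaseLemmas

variable {β : Type}

theorem blocksFrom_succ' {p : ℕ} (w : Fin p → List β) (e : Fin p → ℕ) (i' : Fin p) :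
    blocksFrom w e (i' : ℕ) = wpow (w i') (e i') ++ blocksFrom w e ((i' : ℕ) + 1) := by
  have h := blocksFrom_succ w e i'.2
  simpa only [Fin.eta] using h

/-- Case `i ≥ p`. -/
theorem gset_base_case {p q : ℕ} (u : Fin p → List β) (v : Fin q → List β)
    (hv : ∀ t, v t ≠ []) {i : ℕ} (hip : p ≤ i) (j : ℕ) (z : List β) :
    IsSemilinearSetNat (Gset u v i j z) := by
  rcases eq_or_ne z [] with rfl | hz
  · set f : ((Fin p ⊕ Fin q) → ℕ) →+ (Fin q → ℕ) :=
      { toFun := fun x t => if j ≤ (t : ℕ) then x (Sum.inr t) else 0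
        map_zero' := by funext t; by_cases h : j ≤ (t : ℕ) <;> simp [h]
        map_add' := fun s t => by
          funext t'; by_cases h : j ≤ (t' : ℕ) <;> simp [h] } with hf
    have hs := isSemilinearSet_solutionSet f 0 0 0
    have hrw : {x | f x + 0 = (0 : ((Fin p ⊕ Fin q) → ℕ) →+ (Fin q → ℕ)) x + 0}
        = Gset u v i j ([] : List β) := by
      ext x
      rw [mem_Gset, blocksFrom_of_ge u _ hip, List.nil_append, eq_comm,
        blocksFrom_eq_nil_iff hv]
      simp only [Set.mem_setOf_eq, add_zero, AddMonoidHom.zero_apply]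
      constructor
      · intro h t ht
        have := congrFun h t
        simp only [hf, AddMonoidHom.coe_mk, ZeroHom.coe_mk, if_pos ht, Pi.zero_apply] at this
        exact this
      · intro h
        funext t
        simp only [hf, AddMonoidHom.coe_mk, ZeroHom.coe_mk, Pi.zero_apply]
        by_cases ht : j ≤ (t : ℕ)
        · rw [if_pos ht]; exact h t ht
        · rw [if_neg ht]
    rwa [hrw] at hs
  · have hset : Gset u v i j z = ∅ := by
      ext x
      simp only [mem_Gset, Set.mem_empty_iff_false, iff_false]
      intro hx
      rw [blocksFrom_of_ge u _ hip] at hx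
      have hlen := congrArg List.length hx
      have hzpos : 0 < z.length := List.length_pos_iff.2 hz
      simp only [List.length_nil, List.length_append] at hlen
      omega
    rw [hset]; exact isSemilinearSet_empty

/-- Case `i < p`, `j ≥ q`. -/
theorem gset_tail_case {p q : ℕ} (u : Fin p → List β) (v : Fin q → List β)
    (hu : ∀ t, u t ≠ []) (i' : Fin p) {j : ℕ} (hjq : q ≤ j) (z : List β)
    (IHG : IsSemilinearSetNat (Gset u v ((i' : ℕ) + 1) j z))
    (IHdrop : u i' <+: z →
      IsSemilinearSetNat (Gset u v (i' : ℕ) j (z.drop (u i').length))) :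
    IsSemilinearSetNat (Gset u v (i' : ℕ) j z) := by
  classical
  set eI : (Fin p ⊕ Fin q) → ℕ := Pi.single (Sum.inl i') 1 with heI
  have hVnil : ∀ x : (Fin p ⊕ Fin q) → ℕ,
      blocksFrom v (fun t => x (Sum.inr t)) j = [] :=
    fun x => blocksFrom_of_ge v _ hjq
  have hinl_ne : ∀ t : Fin p, (i' : ℕ) + 1 ≤ (t : ℕ) →
      (Sum.inl t : Fin p ⊕ Fin q) ≠ Sum.inl i' := by
    intro t ht hc
    have : t = i' := Sum.inl_injective hc
    subst this
    omega
  have hdec : Gset u v (i' : ℕ) j z =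
      ({x : (Fin p ⊕ Fin q) → ℕ | x (Sum.inl i') = 0} ∩ Gset u v ((i' : ℕ) + 1) j z) ∪
      (if u i' <+: z
        then (fun y => eI + y) '' Gset u v (i' : ℕ) j (z.drop (u i').length)
        else ∅) := by
    ext x
    simp only [Set.mem_union, Set.mem_inter_iff, Set.mem_setOf_eq]
    rw [mem_Gset, hVnil, List.append_nil, blocksFrom_succ' u _ i']
    constructor
    · intro hx
      cases hxa : x (Sum.inl i') with
      | zero =>
        left
        refine ⟨rfl, ?_⟩
        rw [hxa, wpow_zero, List.nil_append] at hx
        rw [mem_Gset, hVnil, List.append_nil]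
        exact hx
      | succ k =>
        right
        rw [hxa, wpow_succ, List.append_assoc] at hx
        have hpre : u i' <+: z := ⟨_, hx⟩
        rw [if_pos hpre]
        refine ⟨Function.update x (Sum.inl i') k, ?_, ?_⟩
        · rw [mem_Gset, hVnil, List.append_nil, blocksFrom_succ' u _ i']
          have h1 : Function.update x (Sum.inl i') k (Sum.inl i') = k :=
            Function.update_self _ _ _
          have h2 : blocksFrom u (fun t => Function.update x (Sum.inl i') k (Sum.inl t))
              ((i' : ℕ) + 1) = blocksFrom u (fun t => x (Sum.inl t)) ((i' : ℕ) + 1) := by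
            apply blocksFrom_congr
            intro t ht
            exact Function.update_of_ne (hinl_ne t ht) _ _
          rw [h1, h2]
          have := congrArg (List.drop (u i').length) hx
          rwa [List.drop_left] at this
        · show eI + Function.update x (Sum.inl i') k = x
          funext c
          by_cases hc : c = Sum.inl i'
          · subst hc
            simp only [Pi.add_apply, heI, Pi.single_eq_same, Function.update_self]
            omega
          · simp only [Pi.add_apply, heI, Pi.single_eq_of_ne hc, Function.update_of_ne hc]
            omega
    · intro hx
      rcases hx with ⟨h0, hmem⟩ | hmem
      · rw [mem_Gset, hVnil, List.append_nil] at hmem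
        rw [h0, wpow_zero, List.nil_append]
        exact hmem
      · rw [apply_ite (fun S => x ∈ S)] at hmem
        by_cases hpre : u i' <+: z
        · rw [if_pos hpre] at hmem
          obtain ⟨y, hy, rfl⟩ := hmem
          rw [mem_Gset, hVnil, List.append_nil, blocksFrom_succ' u _ i'] at hy
          have h1 : (eI + y) (Sum.inl i') = 1 + y (Sum.inl i') := by
            simp only [Pi.add_apply, heI, Pi.single_eq_same]
          have h2 : blocksFrom u (fun t => (eI + y) (Sum.inl t)) ((i' : ℕ) + 1)
              = blocksFrom u (fun t => y (Sum.inl t)) ((i' : ℕ) + 1) := by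
            apply blocksFrom_congr
            intro t ht
            simp only [Pi.add_apply, heI, Pi.single_eq_of_ne (hinl_ne t ht)]
            omega
          change wpow (u i') ((eI + y) (Sum.inl i')) ++
            blocksFrom u (fun t => (eI + y) (Sum.inl t)) ((i' : ℕ) + 1) = z
          rw [h1, h2, wpow_add]
          have hw1 : wpow (u i') 1 = u i' := by simp [wpow_succ, wpow_zero]
          rw [hw1, List.append_assoc, hy]
          obtain ⟨w, hw⟩ := hpre
          rw [← hw, List.drop_left]
        · rw [if_neg hpre] at hmem
          exact absurd hmem (Set.notMem_empty x)
  rw [hdec]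
  refine ((isSemilinearSet_coordEq _ 0).inter IHG).union ?_
  split_ifs with h
  · exact (IHdrop h).shift eI
  · exact isSemilinearSet_empty
end CaseLemmas

section MainCase

variable {β : Type}

theorem updHom_elim_eq_update {γ δ : Type} [DecidableEq γ] (c₀ : γ) (e₀ : δ)
    (x : γ → ℕ) (g : δ → ℕ) :
    updHom c₀ e₀ (Sum.elim x g) = Function.update x c₀ (g e₀) := by
  funext c
  rw [updHom_apply]
  by_cases hc : c = c₀
  · subst hc; rw [if_pos rfl, Function.update_self]; rfl
  · rw [if_neg hc, Function.update_of_ne hc]; rfl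

theorem blocksFrom_update_inl {p q : ℕ} (w : Fin p → List β)
    (x : (Fin p ⊕ Fin q) → ℕ) (j' : Fin q) (k m : ℕ) :
    blocksFrom w (fun t => Function.update x (Sum.inr j') k (Sum.inl t)) m
      = blocksFrom w (fun t => x (Sum.inl t)) m := by
  apply blocksFrom_congr
  intro t _
  exact Function.update_of_ne (by simp) _ _

theorem blocksFrom_update_inr {p q : ℕ} (w : Fin q → List β)
    (x : (Fin p ⊕ Fin q) → ℕ) (i' : Fin p) (k m : ℕ) :
    blocksFrom w (fun t => Function.update x (Sum.inl i') k (Sum.inr t)) m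
      = blocksFrom w (fun t => x (Sum.inr t)) m := by
  apply blocksFrom_congr
  intro t _
  exact Function.update_of_ne (by simp) _ _

theorem update_inr_mem_Gset {p q : ℕ} (u : Fin p → List β) (v : Fin q → List β)
    (i₂ : ℕ) (j' : Fin q) (z₂ : List β) (x : (Fin p ⊕ Fin q) → ℕ) (k : ℕ) :
    Function.update x (Sum.inr j') k ∈ Gset u v i₂ (j' : ℕ) z₂ ↔
      blocksFrom u (fun t => x (Sum.inl t)) i₂
        = z₂ ++ (wpow (v j') k ++ blocksFrom v (fun t => x (Sum.inr t)) ((j' : ℕ) + 1)) := by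
  rw [mem_Gset, blocksFrom_update_inl, blocksFrom_succ' v _ j', Function.update_self]
  have hcongr : blocksFrom v
      (fun t => Function.update x (Sum.inr j') k (Sum.inr t)) ((j' : ℕ) + 1)
      = blocksFrom v (fun t => x (Sum.inr t)) ((j' : ℕ) + 1) := by
    apply blocksFrom_congr
    intro t ht
    apply Function.update_of_ne
    intro hc
    have : t = j' := Sum.inr_injective hc
    subst this
    omega
  rw [hcongr]

theorem update_inl_mem_GsetSwap {p q : ℕ} (u : Fin p → List β) (v : Fin q → List β)
    (j₂ : ℕ) (i' : Fin p) (z₂ : List β) (x : (Fin p ⊕ Fin q) → ℕ) (k : ℕ) :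
    (Function.update x (Sum.inl i') k) ∘ Sum.swap ∈ Gset v u j₂ (i' : ℕ) z₂ ↔
      blocksFrom v (fun t => x (Sum.inr t)) j₂
        = z₂ ++ (wpow (u i') k ++ blocksFrom u (fun t => x (Sum.inl t)) ((i' : ℕ) + 1)) := by
  rw [mem_Gset]
  have h1 : (fun t : Fin q => ((Function.update x (Sum.inl i') k) ∘ Sum.swap) (Sum.inl t))
      = fun t => x (Sum.inr t) := by
    funext t
    show Function.update x (Sum.inl i') k (Sum.inr t) = x (Sum.inr t)
    exact Function.update_of_ne (by simp) _ _
  have h2 : (fun t : Fin p => ((Function.update x (Sum.inl i') k) ∘ Sum.swap) (Sum.inr t))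
      = fun t => Function.update x (Sum.inl i') k (Sum.inl t) := rfl
  rw [h1, h2, blocksFrom_succ' u _ i', Function.update_self]
  have hcongr : blocksFrom u
      (fun t => Function.update x (Sum.inl i') k (Sum.inl t)) ((i' : ℕ) + 1)
      = blocksFrom u (fun t => x (Sum.inl t)) ((i' : ℕ) + 1) := by
    apply blocksFrom_congr
    intro t ht
    apply Function.update_of_ne
    intro hc
    have : t = i' := Sum.inl_injective hc
    subst this
    omega
  rw [hcongr]

theorem comp_swap_updHom_elim {p q : ℕ} (i' : Fin p) (x : (Fin p ⊕ Fin q) → ℕ)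
    (g : Fin 2 → ℕ) :
    ((precompHom (Sum.swap : (Fin q ⊕ Fin p) → (Fin p ⊕ Fin q))).comp
        (updHom (Sum.inl i') (0 : Fin 2))) (Sum.elim x g)
      = (Function.update x (Sum.inl i') (g 0)) ∘ Sum.swap := by
  rw [AddMonoidHom.comp_apply, updHom_elim_eq_update]
  rfl

end MainCase

section MainCaseProof

variable {β : Type}

theorem updHom_eq_update {γ δ : Type} [DecidableEq γ] (c₀ : γ) (e₀ : δ)
    (w : (γ ⊕ δ) → ℕ) :
    updHom c₀ e₀ w = Function.update (fun c => w (Sum.inl c)) c₀ (w (Sum.inr e₀)) := by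
  funext c
  rw [updHom_apply]
  by_cases hc : c = c₀
  · subst hc; rw [if_pos rfl, Function.update_self]
  · rw [if_neg hc, Function.update_of_ne hc]

theorem gset_main_case {p q : ℕ} (u : Fin p → List β) (v : Fin q → List β)
    (hu : ∀ t, u t ≠ []) (hv : ∀ t, v t ≠ []) (i' : Fin p) (j' : Fin q) (z : List β)
    (IHG : ∀ z' : List β, IsSemilinearSetNat (Gset u v ((i' : ℕ) + 1) (j' : ℕ) z'))
    (IHH : ∀ z' : List β, IsSemilinearSetNat (Gset v u ((j' : ℕ) + 1) (i' : ℕ) z')) :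
    IsSemilinearSetNat (Gset u v (i' : ℕ) (j' : ℕ) z) := by
  classical
  have hA₀pos : 0 < (u i').length := List.length_pos_iff.2 (hu i')
  have hB₀pos : 0 < (v j').length := List.length_pos_iff.2 (hv j')
  set P1 : Set ((Fin p ⊕ Fin q) → ℕ) :=
    ⋃ n ∈ Finset.range (z.length / (u i').length + 1),
      if n * (u i').length ≤ z.length ∧ wpow (u i') n <+: z then
        {x : (Fin p ⊕ Fin q) → ℕ | x (Sum.inl i') = n} ∩
          Gset u v ((i' : ℕ) + 1) (j' : ℕ) (z.drop (n * (u i').length))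
      else ∅ with hP1
  set P2 : Set ((Fin p ⊕ Fin q) → ℕ) :=
    ⋃ r ∈ Finset.range (v j').length,
      {x : (Fin p ⊕ Fin q) → ℕ |
          ∃ c, wpow (u i') (x (Sum.inl i')) <+: z ++ wpow (v j') c} ∩
      (precompHom (Sum.inl : (Fin p ⊕ Fin q) → ((Fin p ⊕ Fin q) ⊕ Fin 2))) ''
        ({w : ((Fin p ⊕ Fin q) ⊕ Fin 2) → ℕ |
            updHom (Sum.inr j') (0 : Fin 2) w ∈ Gset u v ((i' : ℕ) + 1) (j' : ℕ)
              (if r = 0 then [] else (v j').drop ((v j').length - r))} ∩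
         ({w : ((Fin p ⊕ Fin q) ⊕ Fin 2) → ℕ |
            w (Sum.inl (Sum.inl i')) * (u i').length + w (Sum.inl (Sum.inl i')) * 0 + 0
              = w (Sum.inr 1) * 1 + w (Sum.inr 1) * 0 + (z.length + 1)} ∩
          {w : ((Fin p ⊕ Fin q) ⊕ Fin 2) → ℕ |
            w (Sum.inl (Sum.inl i')) * (u i').length + w (Sum.inr 0) * (v j').length + r
              = w (Sum.inl (Sum.inr j')) * (v j').length + w (Sum.inl (Sum.inr j')) * 0
                  + z.length})) with hP2
  set P3 : Set ((Fin p ⊕ Fin q) → ℕ) :=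
    ⋃ r ∈ Finset.range (u i').length,
      {x : (Fin p ⊕ Fin q) → ℕ |
          ∃ n, z ++ wpow (v j') (x (Sum.inr j')) <+: wpow (u i') n} ∩
      (precompHom (Sum.inl : (Fin p ⊕ Fin q) → ((Fin p ⊕ Fin q) ⊕ Fin 2))) ''
        ({w : ((Fin p ⊕ Fin q) ⊕ Fin 2) → ℕ |
            ((precompHom (Sum.swap : (Fin q ⊕ Fin p) → (Fin p ⊕ Fin q))).comp
              (updHom (Sum.inl i') (0 : Fin 2))) w ∈ Gset v u ((j' : ℕ) + 1) (i' : ℕ)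
              (if r = 0 then [] else (u i').drop ((u i').length - r))} ∩
         ({w : ((Fin p ⊕ Fin q) ⊕ Fin 2) → ℕ |
            w (Sum.inr 0) * (u i').length + w (Sum.inr 0) * 0 + r
              = w (Sum.inr 1) * 1 + w (Sum.inr 1) * 0 + 1} ∩
          {w : ((Fin p ⊕ Fin q) ⊕ Fin 2) → ℕ |
            w (Sum.inl (Sum.inl i')) * (u i').length + w (Sum.inl (Sum.inl i')) * 0 + 0
              = w (Sum.inl (Sum.inr j')) * (v j').length + w (Sum.inr 0) * (u i').length
                  + (z.length + r)})) with hP3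
  have hdec : Gset u v (i' : ℕ) (j' : ℕ) z = (P1 ∪ P2) ∪ P3 := by
    ext x
    rw [mem_Gset, blocksFrom_succ' u _ i', blocksFrom_succ' v _ j']
    constructor
    · intro hx
      rcases le_or_gt (x (Sum.inl i') * (u i').length) z.length with hL | hL
      · -- Piece 1
      -- x (Sum.inl i') * (u i').length ≤ z.length
        left; left
        rw [hP1]
        have hlen1 : (wpow (u i') (x (Sum.inl i'))).length ≤ z.length := by
          rw [wpow_length]; exact hL
        obtain ⟨h1, h2⟩ := append_split hx hlen1
        simp only [Set.mem_iUnion, Finset.mem_range]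
        refine ⟨x (Sum.inl i'), ?_, ?_⟩
        · have := (Nat.le_div_iff_mul_le hA₀pos).2 hL
          omega
        rw [if_pos ⟨hL, List.prefix_iff_eq_take.2 (by rw [wpow_length] at h1 ⊢; exact h1)⟩]
        refine ⟨rfl, ?_⟩
        rw [mem_Gset, blocksFrom_succ' v _ j']
        rw [wpow_length] at h2
        exact h2
      · rcases le_or_gt (x (Sum.inl i') * (u i').length)
            (z.length + x (Sum.inr j') * (v j').length) with hL2 | hL3
        · -- Piece 2
          left; right
          rw [hP2]
          set s := z.length + x (Sum.inr j') * (v j').length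
            - x (Sum.inl i') * (u i').length with hs
          have hx' : wpow (u i') (x (Sum.inl i')) ++
              blocksFrom u (fun t => x (Sum.inl t)) ((i' : ℕ) + 1)
              = (z ++ wpow (v j') (x (Sum.inr j'))) ++
                blocksFrom v (fun t => x (Sum.inr t)) ((j' : ℕ) + 1) := by
            rw [hx, List.append_assoc]
          have hlen2 : (wpow (u i') (x (Sum.inl i'))).length
              ≤ (z ++ wpow (v j') (x (Sum.inr j'))).length := by
            rw [wpow_length, List.length_append, wpow_length]; exact hL2
          obtain ⟨h1, h2⟩ := append_split hx' hlen2
          have hdm : s / (v j').length * (v j').length + s % (v j').length = s :=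
            Nat.div_add_mod' s (v j').length
          have hrlt : s % (v j').length < (v j').length := Nat.mod_lt _ hB₀pos
          rw [wpow_length] at h1 h2
          have hdrop : (z ++ wpow (v j') (x (Sum.inr j'))).drop
              (x (Sum.inl i') * (u i').length)
              = (if s % (v j').length = 0 then [] else
                  (v j').drop ((v j').length - s % (v j').length)) ++
                wpow (v j') (s / (v j').length) := by
            rw [List.drop_append,
              List.drop_eq_nil_of_le (by omega), List.nil_append]
            have hidx : x (Sum.inl i') * (u i').length - z.length
                = x (Sum.inr j') * (v j').length
                  - (s / (v j').length * (v j').length + s % (v j').length) := by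
              omega
            rw [hidx]
            exact drop_wpow (v j') hrlt (by omega)
          simp only [Set.mem_iUnion, Finset.mem_range]
          refine ⟨s % (v j').length, hrlt,
            ⟨x (Sum.inr j'), List.prefix_iff_eq_take.2 (by rw [wpow_length]; exact h1)⟩,
            Sum.elim x ![s / (v j').length,
              x (Sum.inl i') * (u i').length - z.length - 1], ⟨?_, ?_, ?_⟩, ?_⟩
          · simp only [Set.mem_setOf_eq]
            rw [updHom_elim_eq_update]
            show Function.update x (Sum.inr j') (s / (v j').length) ∈ _
            rw [update_inr_mem_Gset]
            rw [h2, hdrop, List.append_assoc]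
          · show x (Sum.inl i') * (u i').length + x (Sum.inl i') * 0 + 0
              = (x (Sum.inl i') * (u i').length - z.length - 1) * 1
                + (x (Sum.inl i') * (u i').length - z.length - 1) * 0 + (z.length + 1)
            omega
          · show x (Sum.inl i') * (u i').length
                + (s / (v j').length) * (v j').length + s % (v j').length
              = x (Sum.inr j') * (v j').length + x (Sum.inr j') * 0 + z.length
            omega
          · funext c
            rfl
        · -- Piece 3
          right
          rw [hP3]
          set s := x (Sum.inl i') * (u i').length - z.length
            - x (Sum.inr j') * (v j').length with hs
          have hx' : (z ++ wpow (v j') (x (Sum.inr j'))) ++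
              blocksFrom v (fun t => x (Sum.inr t)) ((j' : ℕ) + 1)
              = wpow (u i') (x (Sum.inl i')) ++
                blocksFrom u (fun t => x (Sum.inl t)) ((i' : ℕ) + 1) := by
            rw [List.append_assoc]; exact hx.symm
          have hlen3 : (z ++ wpow (v j') (x (Sum.inr j'))).length
              ≤ (wpow (u i') (x (Sum.inl i'))).length := by
            rw [List.length_append, wpow_length, wpow_length]; omega
          obtain ⟨h1, h2⟩ := append_split hx' hlen3
          have hdm : s / (u i').length * (u i').length + s % (u i').length = s :=
            Nat.div_add_mod' s (u i').length
          have hrlt : s % (u i').length < (u i').length := Nat.mod_lt _ hA₀pos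
          have hlenzb : (z ++ wpow (v j') (x (Sum.inr j'))).length
              = z.length + x (Sum.inr j') * (v j').length := by
            rw [List.length_append, wpow_length]
          rw [hlenzb] at h1 h2
          have hdrop : (wpow (u i') (x (Sum.inl i'))).drop
              (z.length + x (Sum.inr j') * (v j').length)
              = (if s % (u i').length = 0 then [] else
                  (u i').drop ((u i').length - s % (u i').length)) ++
                wpow (u i') (s / (u i').length) := by
            have hidx : z.length + x (Sum.inr j') * (v j').length
                = x (Sum.inl i') * (u i').length
                  - (s / (u i').length * (u i').length + s % (u i').length) := by
              omega
            rw [hidx]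
            exact drop_wpow (u i') hrlt (by omega)
          simp only [Set.mem_iUnion, Finset.mem_range]
          refine ⟨s % (u i').length, hrlt,
            ⟨x (Sum.inl i'), List.prefix_iff_eq_take.2 (by rw [hlenzb]; exact h1)⟩,
            Sum.elim x ![s / (u i').length, s - 1], ⟨?_, ?_, ?_⟩, ?_⟩
          · simp only [Set.mem_setOf_eq]
            rw [comp_swap_updHom_elim]
            show (Function.update x (Sum.inl i') (s / (u i').length)) ∘ Sum.swap ∈ _
            rw [update_inl_mem_GsetSwap]
            rw [h2, hdrop, List.append_assoc]
          · show (s / (u i').length) * (u i').length + (s / (u i').length) * 0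
                + s % (u i').length
              = (s - 1) * 1 + (s - 1) * 0 + 1
            omega
          · show x (Sum.inl i') * (u i').length + x (Sum.inl i') * 0 + 0
              = x (Sum.inr j') * (v j').length
                + (s / (u i').length) * (u i').length + (z.length + s % (u i').length)
            omega
          · funext c
            rfl
    · intro hx
      rcases hx with (hx | hx) | hx
      · -- from P1
        rw [hP1] at hx
        simp only [Set.mem_iUnion, Finset.mem_range] at hx
        obtain ⟨n, hn, hmem⟩ := hx
        by_cases hcond : n * (u i').length ≤ z.length ∧ wpow (u i') n <+: z
        · rw [if_pos hcond] at hmem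
          obtain ⟨hxa, hG⟩ := hmem
          rw [mem_Gset, blocksFrom_succ' v _ j'] at hG
          rw [hxa]
          apply append_split_converse
          · rw [wpow_length]
            have := List.prefix_iff_eq_take.1 hcond.2
            rw [wpow_length] at this
            exact this
          · rw [wpow_length]
            exact hG
        · rw [if_neg hcond] at hmem
          exact absurd hmem (Set.notMem_empty x)
      · -- from P2
        rw [hP2] at hx
        simp only [Set.mem_iUnion, Finset.mem_range] at hx
        obtain ⟨r, hr, ⟨c₀, hPp⟩, w, ⟨hwG, hE1, hE2⟩, hproj⟩ := hx
        have hxc : ∀ c, x c = w (Sum.inl c) := by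
          intro c; rw [← hproj]; rfl
        have hwx : (fun c => w (Sum.inl c)) = x := by
          funext c; exact (hxc c).symm
        simp only [Set.mem_setOf_eq] at hwG hE1 hE2
        rw [updHom_eq_update, hwx, update_inr_mem_Gset] at hwG
        rw [← hxc (Sum.inl i')] at hE1 hE2
        rw [← hxc (Sum.inr j')] at hE2
        have hlen : x (Sum.inl i') * (u i').length
            ≤ z.length + x (Sum.inr j') * (v j').length := by omega
        have hpre : wpow (u i') (x (Sum.inl i')) <+: z ++ wpow (v j') (x (Sum.inr j')) := by
          refine prefix_of_exists_prefix ⟨c₀, hPp⟩ ?_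
          rw [wpow_length, List.length_append, wpow_length]
          exact hlen
        have h1 := List.prefix_iff_eq_take.1 hpre
        have hdrop : (z ++ wpow (v j') (x (Sum.inr j'))).drop
            (x (Sum.inl i') * (u i').length)
            = (if r = 0 then [] else (v j').drop ((v j').length - r)) ++
              wpow (v j') (w (Sum.inr 0)) := by
          rw [List.drop_append,
            List.drop_eq_nil_of_le (by omega), List.nil_append]
          have hidx : x (Sum.inl i') * (u i').length - z.length
              = x (Sum.inr j') * (v j').length
                - (w (Sum.inr 0) * (v j').length + r) := by omega
          rw [hidx]
          exact drop_wpow (v j') hr (by omega)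
        have hb : blocksFrom u (fun t => x (Sum.inl t)) ((i' : ℕ) + 1)
            = (z ++ wpow (v j') (x (Sum.inr j'))).drop
                ((wpow (u i') (x (Sum.inl i'))).length) ++
              blocksFrom v (fun t => x (Sum.inr t)) ((j' : ℕ) + 1) := by
          rw [wpow_length, hdrop, List.append_assoc]
          exact hwG
        have hconv := append_split_converse h1 hb
        rw [List.append_assoc] at hconv
        exact hconv
      · -- from P3
        rw [hP3] at hx
        simp only [Set.mem_iUnion, Finset.mem_range] at hx
        obtain ⟨r, hr, ⟨n₀, hQp⟩, w, ⟨hwG, hE1, hE2⟩, hproj⟩ := hx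
        have hxc : ∀ c, x c = w (Sum.inl c) := by
          intro c; rw [← hproj]; rfl
        have hwx : (fun c => w (Sum.inl c)) = x := by
          funext c; exact (hxc c).symm
        have hcomp : ((precompHom (Sum.swap : (Fin q ⊕ Fin p) → (Fin p ⊕ Fin q))).comp
            (updHom (Sum.inl i') (0 : Fin 2))) w
            = (Function.update x (Sum.inl i') (w (Sum.inr 0))) ∘ Sum.swap := by
          rw [AddMonoidHom.comp_apply, updHom_eq_update, hwx]
          rfl
        simp only [Set.mem_setOf_eq] at hwG hE1 hE2
        rw [hcomp, update_inl_mem_GsetSwap] at hwG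
        rw [← hxc (Sum.inl i'), ← hxc (Sum.inr j')] at hE2
        have hlen : z.length + x (Sum.inr j') * (v j').length
            ≤ x (Sum.inl i') * (u i').length := by omega
        have hpre : z ++ wpow (v j') (x (Sum.inr j')) <+: wpow (u i') (x (Sum.inl i')) := by
          refine prefix_of_exists_prefix' ⟨n₀, hQp⟩ ?_
          rw [wpow_length, List.length_append, wpow_length]
          exact hlen
        have h1 := List.prefix_iff_eq_take.1 hpre
        have hlenzb : (z ++ wpow (v j') (x (Sum.inr j'))).length
            = z.length + x (Sum.inr j') * (v j').length := by
          rw [List.length_append, wpow_length]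
        have hdrop : (wpow (u i') (x (Sum.inl i'))).drop
            (z.length + x (Sum.inr j') * (v j').length)
            = (if r = 0 then [] else (u i').drop ((u i').length - r)) ++
              wpow (u i') (w (Sum.inr 0)) := by
          have hidx : z.length + x (Sum.inr j') * (v j').length
              = x (Sum.inl i') * (u i').length
                - (w (Sum.inr 0) * (u i').length + r) := by omega
          rw [hidx]
          exact drop_wpow (u i') hr (by omega)
        have hb : blocksFrom v (fun t => x (Sum.inr t)) ((j' : ℕ) + 1)
            = (wpow (u i') (x (Sum.inl i'))).drop
                ((z ++ wpow (v j') (x (Sum.inr j'))).length) ++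
              blocksFrom u (fun t => x (Sum.inl t)) ((i' : ℕ) + 1) := by
          rw [hlenzb, hdrop, List.append_assoc]
          exact hwG
        have hconv := append_split_converse h1 hb
        rw [List.append_assoc] at hconv
        exact hconv.symm
  rw [hdec]
  refine IsSemilinearSetNat.union (IsSemilinearSetNat.union ?_ ?_) ?_
  · rw [hP1]
    refine IsSemilinearSetNat.biUnion _ fun n _ => ?_
    split_ifs with h
    · exact (isSemilinearSet_coordEq _ n).inter (IHG _)
    · exact isSemilinearSet_empty
  · rw [hP2]
    refine IsSemilinearSetNat.biUnion _ fun r _ => ?_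
    refine IsSemilinearSetNat.inter ?_ ?_
    · exact isSemilinearSet_coordDC (Sum.inl i')
        (fun n => ∃ c, wpow (u i') n <+: z ++ wpow (v j') c)
        (by rintro m n hmn ⟨c, hc⟩; exact ⟨c, (wpow_prefix _ hmn).trans hc⟩)
    · refine IsSemilinearSetNat.image ?_ _
      refine IsSemilinearSetNat.inter (isSemilinearSet_hom_preimage (IHG _) _) ?_
      exact (isSemilinearSet_affineEq _ _ _ _ _ _ _ _ _ _).inter
        (isSemilinearSet_affineEq _ _ _ _ _ _ _ _ _ _)
  · rw [hP3]
    refine IsSemilinearSetNat.biUnion _ fun r _ => ?_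
    refine IsSemilinearSetNat.inter ?_ ?_
    · exact isSemilinearSet_coordDC (Sum.inr j')
        (fun c => ∃ n, z ++ wpow (v j') c <+: wpow (u i') n)
        (by rintro m n hmn ⟨n₀, hc⟩
            exact ⟨n₀, (prefix_append_left z (wpow_prefix _ hmn)).trans hc⟩)
    · refine IsSemilinearSetNat.image ?_ _
      refine IsSemilinearSetNat.inter (isSemilinearSet_hom_preimage (IHH _) _) ?_
      exact (isSemilinearSet_affineEq _ _ _ _ _ _ _ _ _ _).inter
        (isSemilinearSet_affineEq _ _ _ _ _ _ _ _ _ _)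

end MainCaseProof

section Master

variable {β : Type}

theorem gset_semilinear {p q : ℕ} (u : Fin p → List β) (v : Fin q → List β)
    (hu : ∀ t, u t ≠ []) (hv : ∀ t, v t ≠ []) (i j : ℕ) (z : List β) :
    IsSemilinearSetNat (Gset u v i j z) := by
  suffices H : ∀ (n₁ n₂ : ℕ) (p q : ℕ) (u : Fin p → List β) (v : Fin q → List β),
      (∀ t, u t ≠ []) → (∀ t, v t ≠ []) → ∀ (i j : ℕ) (z : List β),
      (p - i) + (q - j) ≤ n₁ → z.length ≤ n₂ → IsSemilinearSetNat (Gset u v i j z) by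
    exact H ((p - i) + (q - j)) z.length p q u v hu hv i j z le_rfl le_rfl
  intro n₁
  induction n₁ using Nat.strong_induction_on with
  | _ n₁ IH1 =>
  intro n₂
  induction n₂ using Nat.strong_induction_on with
  | _ n₂ IH2 =>
  intro p q u v hu hv i j z h1 h2
  by_cases hip : i < p
  · by_cases hjq : j < q
    · have hmain := gset_main_case u v hu hv ⟨i, hip⟩ ⟨j, hjq⟩ z
        (fun z' => IH1 ((p - (i + 1)) + (q - j)) (by omega) z'.length p q u v hu hv
          (i + 1) j z' (by omega) le_rfl)
        (fun z' => IH1 ((q - (j + 1)) + (p - i)) (by omega) z'.length q p v u hv hu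
          (j + 1) i z' (by omega) le_rfl)
      exact hmain
    · push_neg at hjq
      have htail := gset_tail_case u v hu ⟨i, hip⟩ hjq z
        (IH1 ((p - (i + 1)) + (q - j)) (by omega) z.length p q u v hu hv
          (i + 1) j z (by omega) le_rfl)
        (fun hpre => by
          have hlenu : 0 < (u ⟨i, hip⟩).length := List.length_pos_iff.2 (hu _)
          have hlez : (u ⟨i, hip⟩).length ≤ z.length := hpre.length_le
          have hdlen : (z.drop (u ⟨i, hip⟩).length).length
              = z.length - (u ⟨i, hip⟩).length := List.length_drop
          exact IH2 (z.drop (u ⟨i, hip⟩).length).length (by omega) p q u v hu hv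
            i j _ (by omega) le_rfl)
      exact htail
  · push_neg at hip
    exact gset_base_case u v hv hip j z

end Master


theorem socProd_fin_append {β : Type} {m n : ℕ} (u : Fin m → List β) (v : Fin n → List β)
    (k : Fin m → ℕ) (l : Fin n → ℕ) :
    socProd (Fin.append u v) (Fin.append k l) = socProd u k ++ socProd v l := by
  unfold socProd
  rw [List.ofFn_add, List.flatten_append]
  simp only [Fin.append_left, Fin.append_right]
  simp only [show ∀ i : Fin m, Fin.castLE (Nat.le_add_right m n) i = Fin.castAdd n i from
    fun _ => rfl, Fin.append_left]

theorem blocksFrom_zero_eq {β : Type} {m : ℕ} (w : Fin m → List β) (e : Fin m → ℕ) :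
    blocksFrom w e 0 = socProd w e := blocksFrom_zero w e


end

/-- BSL is closed under concatenation. -/
theorem bsl_concat {α : Type} [Fintype α] (L₁ L₂ : Set (List α))
    (h₁ : InBSL L₁) (h₂ : InBSL L₂) : InBSL (catLang L₁ L₂) := by
  classical
  obtain ⟨n₁, u, hn₁, ⟨hune, husoc⟩, hIter₁⟩ := h₁
  obtain ⟨n₂, v, hn₂, ⟨hvne, hvsoc⟩, hIter₂⟩ := h₂
  have hwne : ∀ t : Fin (n₁ + n₂), Fin.append u v t ≠ [] := by
    intro t
    refine Fin.addCases (motive := fun t => Fin.append u v t ≠ []) ?_ ?_ t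
    · intro i; rw [Fin.append_left]; exact hune i
    · intro i; rw [Fin.append_right]; exact hvne i
  refine ⟨n₁ + n₂, Fin.append u v, by omega, ⟨hwne, ?_⟩, ?_⟩
  · rintro x ⟨x₁, hx₁, x₂, hx₂, rfl⟩
    obtain ⟨k₁, hk₁⟩ := husoc x₁ hx₁
    obtain ⟨k₂, hk₂⟩ := hvsoc x₂ hx₂
    exact ⟨Fin.append k₁ k₂, by rw [socProd_fin_append, hk₁, hk₂]⟩
  · -- semilinearity of the iteration set
    set w := Fin.append u v with hw
    set I : Set ((Fin (n₁ + n₂) ⊕ Fin (n₁ + n₂)) → ℕ) :=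
      {x | precompHom (fun t : Fin n₁ =>
          (Sum.inr (Fin.castAdd n₂ t) : Fin (n₁ + n₂) ⊕ Fin (n₁ + n₂))) x ∈ IterSet L₁ u} ∩
      {x | precompHom (fun t : Fin n₂ =>
          (Sum.inr (Fin.natAdd n₁ t) : Fin (n₁ + n₂) ⊕ Fin (n₁ + n₂))) x ∈ IterSet L₂ v}
      with hI
    have hIsl : IsSemilinearSetNat I := by
      rw [hI]
      exact (isSemilinearSet_hom_preimage hIter₁ _).inter
        (isSemilinearSet_hom_preimage hIter₂ _)
    have hGsl := gset_semilinear w w hwne hwne 0 0 []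
    have hkey : IterSet (catLang L₁ L₂) w =
        (precompHom (Sum.inl : Fin (n₁ + n₂) → (Fin (n₁ + n₂) ⊕ Fin (n₁ + n₂)))) ''
          (Gset w w 0 0 [] ∩ I) := by
      ext k
      constructor
      · intro hk
        obtain ⟨x₁, hx₁, x₂, hx₂, hcat⟩ := hk
        obtain ⟨k₁, hk₁⟩ := husoc x₁ hx₁
        obtain ⟨k₂, hk₂⟩ := hvsoc x₂ hx₂
        refine ⟨Sum.elim k (Fin.append k₁ k₂), ⟨?_, ?_, ?_⟩, ?_⟩
        · rw [mem_Gset, blocksFrom_zero_eq, blocksFrom_zero_eq, List.nil_append]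
          show socProd w k = socProd w (Fin.append k₁ k₂)
          rw [hw, socProd_fin_append, ← hk₁, ← hk₂, ← hcat]
        · show (Sum.elim k (Fin.append k₁ k₂) ∘ fun t : Fin n₁ =>
              (Sum.inr (Fin.castAdd n₂ t) : Fin (n₁ + n₂) ⊕ Fin (n₁ + n₂))) ∈ IterSet L₁ u
          have : (Sum.elim k (Fin.append k₁ k₂) ∘ fun t : Fin n₁ =>
              (Sum.inr (Fin.castAdd n₂ t) : Fin (n₁ + n₂) ⊕ Fin (n₁ + n₂))) = k₁ := by
            funext t
            show Fin.append k₁ k₂ (Fin.castAdd n₂ t) = k₁ t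
            rw [Fin.append_left]
          rw [this]
          show socProd u k₁ ∈ L₁
          rw [← hk₁]; exact hx₁
        · show (Sum.elim k (Fin.append k₁ k₂) ∘ fun t : Fin n₂ =>
              (Sum.inr (Fin.natAdd n₁ t) : Fin (n₁ + n₂) ⊕ Fin (n₁ + n₂))) ∈ IterSet L₂ v
          have : (Sum.elim k (Fin.append k₁ k₂) ∘ fun t : Fin n₂ =>
              (Sum.inr (Fin.natAdd n₁ t) : Fin (n₁ + n₂) ⊕ Fin (n₁ + n₂))) = k₂ := by
            funext t
            show Fin.append k₁ k₂ (Fin.natAdd n₁ t) = k₂ t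
            rw [Fin.append_right]
          rw [this]
          show socProd v k₂ ∈ L₂
          rw [← hk₂]; exact hx₂
        · funext c
          rfl
      · rintro ⟨x, ⟨hG, hI1, hI2⟩, rfl⟩
        rw [mem_Gset, blocksFrom_zero_eq, blocksFrom_zero_eq, List.nil_append] at hG
        set k₁ : Fin n₁ → ℕ := fun t => x (Sum.inr (Fin.castAdd n₂ t)) with hk₁def
        set k₂ : Fin n₂ → ℕ := fun t => x (Sum.inr (Fin.natAdd n₁ t)) with hk₂def
        have hxr : (fun t => x (Sum.inr t)) = Fin.append k₁ k₂ := by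
          funext t
          refine Fin.addCases (motive := fun t => x (Sum.inr t) = Fin.append k₁ k₂ t)
            ?_ ?_ t
          · intro i; rw [Fin.append_left]
          · intro i; rw [Fin.append_right]
        have hmem1 : socProd u k₁ ∈ L₁ := hI1
        have hmem2 : socProd v k₂ ∈ L₂ := hI2
        show socProd w (precompHom Sum.inl x) ∈ catLang L₁ L₂
        refine ⟨socProd u k₁, hmem1, socProd v k₂, hmem2, ?_⟩
        have h1 : socProd w (fun t => x (Sum.inl t)) = socProd w (fun t => x (Sum.inr t)) := hG
        show socProd w (fun t => x (Sum.inl t)) = socProd u k₁ ++ socProd v k₂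
        rw [h1, hxr, hw, socProd_fin_append]
    rw [hkey]
    exact (hGsl.inter hIsl).image _
end

section
/- Let (A, C) be an ε-constrained automaton having the constraint-determinism property: for any two accepting paths π₁, π₂ of A with the same label, Φ(π₁) ∈ C iff Φ(π₂) ∈ C. Then there exists a deterministic affine Parikh automaton (A', U, E) such that L(A', U, E) = L(A, C), L(A') = L(A), and the matrix monoid M(U) is finite. -/
open scoped Classical

noncomputable section Aux

attribute [instance] FinAut.finσ

open FinAut

variable {α : Type}

/-! #### Generic lemmas on words and paths -/

lemma countOcc_append {β : Type} (l₁ l₂ : List β) (b : β) :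
    countOcc (l₁ ++ l₂) b = countOcc l₁ b + countOcc l₂ b := by
  simp [countOcc, List.filter_append]

lemma Steps_append {A : FinAut α} {q r s : A.σ} {π₁ π₂ : List A.Trans}
    (h₁ : A.Steps q π₁ r) (h₂ : A.Steps r π₂ s) : A.Steps q (π₁ ++ π₂) s := by
  induction h₁ with
  | nil => simpa using h₂
  | cons hsrc hst ih => exact FinAut.Steps.cons hsrc (ih h₂)

/-- Splitting a path according to a splitting of its (filterMap) label. -/
lemma Steps_split {A : FinAut (Option α)} {π : List A.Trans} {q s : A.σ}
    (h : A.Steps q π s) : ∀ u vv : List α, π.filterMap FinAut.lbl = u ++ vv →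
    ∃ (r : A.σ) (π₁ π₂ : List A.Trans), A.Steps q π₁ r ∧ A.Steps r π₂ s ∧
      π₁.filterMap FinAut.lbl = u ∧ π₂.filterMap FinAut.lbl = vv := by
  induction h with
  | nil q =>
    intro u vv huv
    simp only [List.filterMap_nil] at huv
    obtain ⟨hu, hv⟩ := List.append_eq_nil_iff.mp huv.symm
    exact ⟨q, [], [], FinAut.Steps.nil q, FinAut.Steps.nil q, by simp [hu], by simp [hv]⟩
  | @cons q r t π' hsrc hst ih =>
    intro u vv huv
    rw [List.filterMap_cons] at huv
    cases hlt : FinAut.lbl t with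
    | none =>
      rw [hlt] at huv
      obtain ⟨r₁, π₁, π₂, s₁, s₂, e₁, e₂⟩ := ih u vv huv
      exact ⟨r₁, t :: π₁, π₂, FinAut.Steps.cons hsrc s₁, s₂,
        by simp [List.filterMap_cons, hlt, e₁], e₂⟩
    | some b =>
      rw [hlt] at huv
      cases u with
      | nil =>
        exact ⟨q, [], t :: π', FinAut.Steps.nil q, FinAut.Steps.cons hsrc hst, rfl,
          by simpa [List.filterMap_cons, hlt] using huv⟩
      | cons c u' =>
        simp only [List.cons_append, List.cons.injEq] at huv
        obtain ⟨rfl, huv'⟩ := huv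
        obtain ⟨r₁, π₁, π₂, s₁, s₂, e₁, e₂⟩ := ih u' vv huv'
        exact ⟨r₁, t :: π₁, π₂, FinAut.Steps.cons hsrc s₁, s₂,
          by simp [List.filterMap_cons, hlt, e₁], e₂⟩

/-! #### Reachability sets for ε-automata -/

variable (A : FinAut (Option α))

/-- States reachable from `q` by a path with (ε-erased) label `[a]`, `q` ranging
over `S`. -/
def stepSet (S : Set A.σ) (a : α) : Set A.σ :=
  {q' | ∃ q, q ∈ S ∧ ∃ π, A.Steps q π q' ∧ π.filterMap FinAut.lbl = [a]}

/-- States reachable from the initial state with label `w`. -/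
def reachW (w : List α) : Set A.σ :=
  {q | ∃ π, A.Steps A.init π q ∧ π.filterMap FinAut.lbl = w}

lemma reachW_snoc (u : List α) (a : α) :
    reachW A (u ++ [a]) = stepSet A (reachW A u) a := by
  ext q'
  constructor
  · rintro ⟨π, hst, hlb⟩
    obtain ⟨r, π₁, π₂, s₁, s₂, e₁, e₂⟩ := Steps_split hst u [a] hlb
    exact ⟨r, ⟨π₁, s₁, e₁⟩, π₂, s₂, e₂⟩
  · rintro ⟨q, ⟨π₁, s₁, e₁⟩, π₂, s₂, e₂⟩
    exact ⟨π₁ ++ π₂, Steps_append s₁ s₂, by simp [e₁, e₂]⟩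

section Det

variable [Fintype α]

/-- The subset automaton of `A` (with a flagged initial state). -/
def detAut : FinAut α where
  σ := Bool × Set A.σ
  init := (false, reachW A [])
  accept := {p | ∃ q ∈ p.2, q ∈ A.accept}
  δ := {t | t.2.2 = (true, stepSet A t.1.2 t.2.1)}
  finδ := Set.toFinite _

/-- The state of the subset automaton after reading `w`. -/
def stt (w : List α) : (detAut A).σ :=
  if w = [] then (false, reachW A []) else (true, reachW A w)

lemma stt_snd (w : List α) : (stt A w).2 = reachW A w := by
  unfold stt
  show (if w = [] then ((false, reachW A []) : Bool × Set A.σ) else (true, reachW A w)).2 = _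
  split <;> simp_all

lemma stt_snoc (w : List α) (a : α) :
    stt A (w ++ [a]) = (true, stepSet A (stt A w).2 a) := by
  rw [stt_snd, stt]
  show (if w ++ [a] = [] then ((false, reachW A []) : Bool × Set A.σ)
    else (true, reachW A (w ++ [a]))) = _
  rw [if_neg (by simp), reachW_snoc]

/-- The canonical transition of the subset automaton. -/
def trn (w : List α) (a : α) : (detAut A).Trans :=
  ⟨(stt A w, a, (true, stepSet A (stt A w).2 a)), rfl⟩

@[simp] lemma trn_src (w : List α) (a : α) : FinAut.src (trn A w a) = stt A w := rfl
@[simp] lemma trn_lbl (w : List α) (a : α) : FinAut.lbl (trn A w a) = a := rfl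
@[simp] lemma trn_tgt (w : List α) (a : α) :
    FinAut.tgt (trn A w a) = stt A (w ++ [a]) := (stt_snoc A w a).symm

/-- The canonical run of the subset automaton on `u`, after having read `pre`. -/
def runFrom : List α → List α → List (detAut A).Trans
  | _, [] => []
  | pre, a :: u => trn A pre a :: runFrom (pre ++ [a]) u

lemma runFrom_steps (u : List α) : ∀ pre,
    (detAut A).Steps (stt A pre) (runFrom A pre u) (stt A (pre ++ u)) := by
  induction u with
  | nil => intro pre; simpa [runFrom] using FinAut.Steps.nil (stt A pre)
  | cons a u ih =>
    intro pre
    refine FinAut.Steps.cons rfl ?_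
    rw [trn_tgt]
    simpa [List.append_assoc] using ih (pre ++ [a])

lemma runFrom_lbl (u : List α) : ∀ pre, (runFrom A pre u).map FinAut.lbl = u := by
  induction u with
  | nil => intro pre; simp [runFrom]
  | cons a u ih => intro pre; simp [runFrom, ih]

lemma runFrom_snoc (u : List α) (a : α) : ∀ pre,
    runFrom A pre (u ++ [a]) = runFrom A pre u ++ [trn A (pre ++ u) a] := by
  induction u with
  | nil => intro pre; simp [runFrom]
  | cons b u ih => intro pre; simp [runFrom, ih, List.append_assoc]

/-- Any path of the subset automaton from `stt pre` is the canonical run of its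
label. -/
lemma path_unique {π : List (detAut A).Trans} {p r : (detAut A).σ}
    (h : (detAut A).Steps p π r) : ∀ pre, p = stt A pre →
    π = runFrom A pre (π.map FinAut.lbl) ∧ r = stt A (pre ++ π.map FinAut.lbl) := by
  induction h with
  | nil q => intro pre hpre; simp [runFrom, hpre]
  | @cons q r t π' hsrc hst ih =>
    intro pre hpre
    have ht : t = trn A pre (FinAut.lbl t) := by
      have hδ := t.2
      simp only [detAut, Set.mem_setOf_eq] at hδ
      apply Subtype.ext
      have h1 : (t.1).1 = stt A pre := hsrc.trans hpre
      show t.1 = (stt A pre, FinAut.lbl t, (true, stepSet A (stt A pre).2 (FinAut.lbl t)))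
      calc t.1 = ((t.1).1, (t.1).2.1, (t.1).2.2) := rfl
        _ = _ := by rw [hδ, h1]; rfl
    have htgt : FinAut.tgt t = stt A (pre ++ [FinAut.lbl t]) := by
      conv_lhs => rw [ht]
      exact trn_tgt A pre (FinAut.lbl t)
    obtain ⟨h₁, h₂⟩ := ih (pre ++ [FinAut.lbl t]) htgt
    constructor
    · rw [List.map_cons]
      show t :: π' = trn A pre (FinAut.lbl t) :: runFrom A (pre ++ [FinAut.lbl t]) _
      rw [← ht, ← h₁]
    · rw [h₂]; simp

lemma detAut_deterministic : (detAut A).Deterministic := by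
  intro p a q q' hq hq'
  simp only [detAut, Set.mem_setOf_eq] at hq hq'
  exact hq.trans hq'.symm

lemma detAut_lang : (detAut A).lang = epsLang A := by
  ext w
  constructor
  · rintro ⟨π, ⟨f, hf, hst⟩, rfl⟩
    obtain ⟨-, h₂⟩ := path_unique A hst [] rfl
    rw [h₂] at hf
    obtain ⟨q, hq, hacc⟩ := hf
    rw [stt_snd] at hq
    obtain ⟨π₀, hs₀, hl₀⟩ := hq
    exact ⟨π₀, ⟨q, hacc, hs₀⟩, by simp [hl₀]⟩
  · rintro ⟨π₀, ⟨q, hacc, hs₀⟩, rfl⟩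
    refine ⟨runFrom A [] (π₀.filterMap FinAut.lbl), ⟨stt A (π₀.filterMap FinAut.lbl), ?_, ?_⟩, ?_⟩
    · exact ⟨q, by rw [stt_snd]; exact ⟨π₀, hs₀, rfl⟩, hacc⟩
    · rw [show (detAut A).init = stt A [] from (if_pos rfl : stt A [] = (false, reachW A [])).symm]
      simpa using runFrom_steps A (π₀.filterMap FinAut.lbl) []
    · rw [runFrom_lbl]

end Det
section Mat

instance instTransFintype : Fintype A.Trans := A.finδ.fintype

/-- Index type of the counters: one counter per (state, transition of `A`), and
one flag per state. -/
abbrev idx : Type := (A.σ × A.Trans) ⊕ A.σ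

instance : Fintype (idx A) := by unfold idx; infer_instance

variable [Fintype α]
set_option linter.unusedSectionVars false

def dd : ℕ := Fintype.card (idx A)

def ee : idx A ≃ Fin (dd A) := Fintype.equivFin _

/-- Chosen predecessor of `q'` in `S`. -/
def qc {S : Set A.σ} {a : α} {q' : A.σ} (h : q' ∈ stepSet A S a) : A.σ := h.choose

lemma qc_mem {S : Set A.σ} {a : α} {q' : A.σ} (h : q' ∈ stepSet A S a) :
    qc A h ∈ S := h.choose_spec.1

/-- Chosen segment from `qc h` to `q'` with label `[a]`. -/
def seg {S : Set A.σ} {a : α} {q' : A.σ} (h : q' ∈ stepSet A S a) : List A.Trans :=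
  h.choose_spec.2.choose

lemma seg_spec {S : Set A.σ} {a : α} {q' : A.σ} (h : q' ∈ stepSet A S a) :
    A.Steps (qc A h) (seg A h) q' ∧ (seg A h).filterMap FinAut.lbl = [a] :=
  h.choose_spec.2.choose_spec

/-- Chosen full path from the initial state with label `[a]`. -/
def fullp {a : α} {q' : A.σ} (h : q' ∈ reachW A [a]) : List A.Trans := h.choose

lemma fullp_spec {a : α} {q' : A.σ} (h : q' ∈ reachW A [a]) :
    A.Steps A.init (fullp A h) q' ∧ (fullp A h).filterMap FinAut.lbl = [a] :=
  h.choose_spec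

/-- Matrix entries, indexed by `idx A`. -/
def Fmat (t : (detAut A).Trans) : idx A → idx A → ℕ := fun i j =>
  if t.1.1.1 = true then
    (match i with
     | Sum.inl (q', s) =>
       if h : q' ∈ stepSet A t.1.1.2 t.1.2.1 then
         (if j = Sum.inl (qc A h, s) then 1 else 0)
       else 0
     | Sum.inr _ => 0)
  else 0

/-- Translation vector entries, indexed by `idx A`. -/
def gvec (t : (detAut A).Trans) : idx A → ℕ := fun i =>
  match i with
  | Sum.inl (q', s) =>
    if t.1.1.1 = true then
      (if h : q' ∈ stepSet A t.1.1.2 t.1.2.1 then countOcc (seg A h) s else 0)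
    else (if h : q' ∈ reachW A [t.1.2.1] then countOcc (fullp A h) s else 0)
  | Sum.inr q' =>
    if t.1.1.1 = true then (if q' ∈ stepSet A t.1.1.2 t.1.2.1 then 1 else 0)
    else (if q' ∈ reachW A [t.1.2.1] then 1 else 0)

def Mmat (t : (detAut A).Trans) : Matrix (Fin (dd A)) (Fin (dd A)) ℕ :=
  Matrix.of fun i j => Fmat A t ((ee A).symm i) ((ee A).symm j)

def vvec (t : (detAut A).Trans) : Fin (dd A) → ℕ := fun i => gvec A t ((ee A).symm i)

lemma vvec_apply (t : (detAut A).Trans) (i : idx A) :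
    vvec A t (ee A i) = gvec A t i := by
  unfold vvec; rw [Equiv.symm_apply_apply]

lemma mulVec_idx (t : (detAut A).Trans) (x : Fin (dd A) → ℕ) (i : idx A) :
    (Mmat A t).mulVec x (ee A i) = ∑ j : idx A, Fmat A t i j * x (ee A j) := by
  show (∑ j : Fin (dd A), Fmat A t ((ee A).symm (ee A i)) ((ee A).symm j) * x j) = _
  rw [Equiv.symm_apply_apply]
  rw [← Equiv.sum_comp (ee A).symm (fun j => Fmat A t i j * x (ee A j))]
  exact Finset.sum_congr rfl fun j _ => by rw [Equiv.apply_symm_apply]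

lemma mulVec_row_ind (t : (detAut A).Trans) (x : Fin (dd A) → ℕ) (i j₀ : idx A)
    (hrow : ∀ j, Fmat A t i j = if j = j₀ then 1 else 0) :
    (Mmat A t).mulVec x (ee A i) = x (ee A j₀) := by
  rw [mulVec_idx]
  simp_rw [hrow, ite_mul, one_mul, zero_mul]
  simp [Finset.sum_ite_eq']

lemma mulVec_row_zero (t : (detAut A).Trans) (x : Fin (dd A) → ℕ) (i : idx A)
    (hrow : ∀ j, Fmat A t i j = 0) :
    (Mmat A t).mulVec x (ee A i) = 0 := by
  rw [mulVec_idx]; simp [hrow]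

lemma Fmat_inr (t : (detAut A).Trans) (q : A.σ) (j : idx A) :
    Fmat A t (Sum.inr q) j = 0 := by
  unfold Fmat; split <;> rfl

lemma pathApply_snoc {β : Type} {d : ℕ} (B : FinAut β)
    (M : B.Trans → Matrix (Fin d) (Fin d) ℕ) (v : B.Trans → Fin d → ℕ)
    (π : List B.Trans) (t : B.Trans) (x : Fin d → ℕ) :
    pathApply B M v (π ++ [t]) x = (M t).mulVec (pathApply B M v π x) + v t := by
  induction π generalizing x with
  | nil => simp [pathApply]
  | cons t' π' ih => simp [pathApply, ih]

lemma stt_nil : stt A [] = (false, reachW A []) := if_pos rfl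

lemma stt_ne {w : List α} (h : w ≠ []) : stt A w = (true, reachW A w) := if_neg h

/-- Value of the counters after reading `w`. -/
def xvec (w : List α) : Fin (dd A) → ℕ :=
  pathApply (detAut A) (Mmat A) (vvec A) (runFrom A [] w) 0

lemma invariant (u : List α) (hne : u ≠ []) :
    (∀ q : A.σ, xvec A u (ee A (Sum.inr q)) = if q ∈ reachW A u then 1 else 0) ∧
    (∀ q ∈ reachW A u, ∃ ρ, A.Steps A.init ρ q ∧ ρ.filterMap FinAut.lbl = u ∧
      ∀ s, xvec A u (ee A (Sum.inl (q, s))) = countOcc ρ s) := by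
  induction u using List.reverseRecOn with
  | nil => exact absurd rfl hne
  | append_singleton u' a ih =>
    rcases eq_or_ne u' [] with rfl | hu'
    · -- base case: u = [a]
      have hrun : runFrom A [] ([] ++ [a]) = [trn A [] a] := by simp [runFrom]
      have hx : xvec A ([] ++ [a]) = vvec A (trn A [] a) := by
        unfold xvec
        rw [hrun]
        show (Mmat A (trn A [] a)).mulVec 0 + vvec A (trn A [] a) = _
        rw [Matrix.mulVec_zero, zero_add]
      have hb : (trn A [] a).1.1.1 = false := by
        show (stt A []).1 = false
        rw [stt_nil]
      have ha : (trn A [] a).1.2.1 = a := rfl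
      have hbne : ¬ ((trn A [] a).1.1.1 = true) := by rw [hb]; simp
      constructor
      · intro q
        rw [hx, vvec_apply]
        show (if (trn A [] a).1.1.1 = true then
            (if q ∈ stepSet A (trn A [] a).1.1.2 (trn A [] a).1.2.1 then 1 else 0) else
          (if q ∈ reachW A [(trn A [] a).1.2.1] then 1 else 0)) = _
        rw [if_neg hbne]
        simp only [List.nil_append]
        rfl
      · intro q hq
        simp only [List.nil_append] at hq
        refine ⟨fullp A hq, (fullp_spec A hq).1, by simp [(fullp_spec A hq).2], ?_⟩
        intro s
        rw [hx, vvec_apply]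
        show (if (trn A [] a).1.1.1 = true then
            (if h : q ∈ stepSet A (trn A [] a).1.1.2 (trn A [] a).1.2.1 then
              countOcc (seg A h) s else 0) else
          (if h : q ∈ reachW A [(trn A [] a).1.2.1] then countOcc (fullp A h) s else 0)) = _
        rw [if_neg hbne]
        show (if h : q ∈ reachW A [a] then countOcc (fullp A h) s else 0) = _
        rw [dif_pos hq]
    · -- step case
      obtain ⟨ihf, ihb⟩ := ih hu'
      set t := trn A u' a with hT
      have hrun : runFrom A [] (u' ++ [a]) = runFrom A [] u' ++ [t] := by
        simpa using runFrom_snoc A u' a []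
      have hx : xvec A (u' ++ [a]) = (Mmat A t).mulVec (xvec A u') + vvec A t := by
        unfold xvec
        rw [hrun, pathApply_snoc]
      have hb : t.1.1.1 = true := by
        show (stt A u').1 = true
        rw [stt_ne A hu']
      have hS : t.1.1.2 = reachW A u' := by
        show (stt A u').2 = _
        rw [stt_snd]
      have ha : t.1.2.1 = a := rfl
      have hreach : reachW A (u' ++ [a]) = stepSet A (reachW A u') a := reachW_snoc A u' a
      constructor
      · intro q
        rw [hx]
        have h0 : (Mmat A t).mulVec (xvec A u') (ee A (Sum.inr q)) = 0 :=
          mulVec_row_zero A t _ _ (Fmat_inr A t q)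
        show (Mmat A t).mulVec (xvec A u') (ee A (Sum.inr q)) + vvec A t (ee A (Sum.inr q)) = _
        rw [h0, zero_add, vvec_apply]
        show (if t.1.1.1 = true then (if q ∈ stepSet A t.1.1.2 t.1.2.1 then 1 else 0)
          else (if q ∈ reachW A [t.1.2.1] then 1 else 0)) = _
        rw [if_pos hb, hS, ha, hreach]
      · intro q' hq'
        rw [hreach] at hq'
        have hq'' : q' ∈ stepSet A t.1.1.2 t.1.2.1 := by rw [hS, ha]; exact hq'
        have hqc : qc A hq'' ∈ reachW A u' :=
          (Set.ext_iff.mp hS (qc A hq'')).mp (qc_mem A hq'')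
        obtain ⟨ρ', hρ's, hρ'l, hρ'c⟩ := ihb _ hqc
        obtain ⟨hsegs, hsegl⟩ := seg_spec A hq''
        refine ⟨ρ' ++ seg A hq'', Steps_append hρ's hsegs, by rw [List.filterMap_append, hρ'l, hsegl, ha], ?_⟩
        intro s
        rw [hx]
        have hrow : ∀ j, Fmat A t (Sum.inl (q', s)) j =
            if j = Sum.inl (qc A hq'', s) then 1 else 0 := by
          intro j
          unfold Fmat
          rw [if_pos hb]
          show (if h : q' ∈ stepSet A t.1.1.2 t.1.2.1 then
            (if j = Sum.inl (qc A h, s) then 1 else 0) else 0) = _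
          rw [dif_pos hq'']
        show (Mmat A t).mulVec (xvec A u') (ee A (Sum.inl (q', s)))
            + vvec A t (ee A (Sum.inl (q', s))) = _
        rw [mulVec_row_ind A t _ _ _ hrow, hρ'c]
        have hv : vvec A t (ee A (Sum.inl (q', s))) = countOcc (seg A hq'') s := by
          rw [vvec_apply]
          show (if t.1.1.1 = true then
            (if h : q' ∈ stepSet A t.1.1.2 t.1.2.1 then countOcc (seg A h) s else 0)
            else (if h : q' ∈ reachW A [t.1.2.1] then countOcc (fullp A h) s else 0)) = _
          rw [if_pos hb, dif_pos hq'']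
        rw [hv, countOcc_append]

end Mat
section Monoid

set_option linter.unusedSectionVars false

variable [Fintype α]

/-- Matrices whose rows are zero or a single `1`. -/
def RowSel (n : ℕ) : Submonoid (Matrix (Fin n) (Fin n) ℕ) where
  carrier := {m | ∀ i, (∀ j, m i j = 0) ∨ ∃ j₀, ∀ j, m i j = if j = j₀ then 1 else 0}
  one_mem' := by
    intro i
    exact Or.inr ⟨i, fun j => by rw [Matrix.one_apply]; simp [eq_comm]⟩
  mul_mem' := by
    intro m n hm hn i
    rcases hm i with h0 | ⟨j₀, hind⟩
    · refine Or.inl fun j => ?_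
      rw [Matrix.mul_apply]
      exact Finset.sum_eq_zero fun k _ => by rw [h0 k, zero_mul]
    · have hrow : ∀ j, (m * n) i j = n j₀ j := by
        intro j
        rw [Matrix.mul_apply]
        simp_rw [hind, ite_mul, one_mul, zero_mul]
        simp [Finset.sum_ite_eq']
      rcases hn j₀ with h0 | ⟨j₁, hind'⟩
      · exact Or.inl fun j => by rw [hrow j, h0 j]
      · exact Or.inr ⟨j₁, fun j => by rw [hrow j, hind' j]⟩

lemma rowSel_finite (n : ℕ) : (RowSel n : Set (Matrix (Fin n) (Fin n) ℕ)).Finite := by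
  have hsub : (RowSel n : Set (Matrix (Fin n) (Fin n) ℕ)) ⊆
      Set.range (fun f : Fin n → Option (Fin n) =>
        Matrix.of fun i j => match f i with
          | none => 0
          | some j₀ => if j = j₀ then 1 else 0) := by
    intro m hm
    refine ⟨fun i => if h : ∃ j₀, ∀ j, m i j = if j = j₀ then 1 else 0
      then some h.choose else none, ?_⟩
    funext i j
    by_cases h : ∃ j₀, ∀ j, m i j = if j = j₀ then 1 else 0
    · simp only [Matrix.of_apply, dif_pos h]
      exact (h.choose_spec j).symm
    · simp only [Matrix.of_apply, dif_neg h]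
      rcases hm i with h0 | hind
      · exact (h0 j).symm
      · exact absurd hind h
  exact Set.Finite.subset (Set.finite_range _) hsub

lemma Fmat_cases (t : (detAut A).Trans) (i : idx A) :
    (∀ j, Fmat A t i j = 0) ∨
    ∃ j₀ : idx A, ∀ j, Fmat A t i j = if j = j₀ then 1 else 0 := by
  by_cases hb : t.1.1.1 = true
  · cases i with
    | inr q => exact Or.inl (Fmat_inr A t q)
    | inl p =>
      obtain ⟨q', s⟩ := p
      by_cases h : q' ∈ stepSet A t.1.1.2 t.1.2.1
      · refine Or.inr ⟨Sum.inl (qc A h, s), fun j => ?_⟩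
        unfold Fmat
        rw [if_pos hb]
        show (if h : q' ∈ stepSet A t.1.1.2 t.1.2.1 then
          (if j = Sum.inl (qc A h, s) then 1 else 0) else 0) = _
        rw [dif_pos h]
      · refine Or.inl fun j => ?_
        unfold Fmat
        rw [if_pos hb]
        show (if h : q' ∈ stepSet A t.1.1.2 t.1.2.1 then
          (if j = Sum.inl (qc A h, s) then 1 else 0) else 0) = _
        rw [dif_neg h]
  · refine Or.inl fun j => ?_
    unfold Fmat
    rw [if_neg hb]

lemma Mmat_mem_rowSel (t : (detAut A).Trans) : Mmat A t ∈ RowSel (dd A) := by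
  intro i
  rcases Fmat_cases A t ((ee A).symm i) with h0 | ⟨j₀, hind⟩
  · exact Or.inl fun j => h0 _
  · refine Or.inr ⟨ee A j₀, fun j => ?_⟩
    show Fmat A t ((ee A).symm i) ((ee A).symm j) = _
    rw [hind]
    exact if_congr ((ee A).symm_apply_eq.trans Iff.rfl) rfl rfl

lemma monoid_finite : (APAMonoid (detAut A) (Mmat A)).Finite := by
  refine Set.Finite.subset (rowSel_finite (dd A)) ?_
  have : Submonoid.closure (Set.range (Mmat A)) ≤ RowSel (dd A) :=
    Submonoid.closure_le.mpr (by rintro m ⟨t, rfl⟩; exact Mmat_mem_rowSel A t)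
  exact this

end Monoid
section Accept

set_option linter.unusedSectionVars false

variable [Fintype α]

/-- The counters block of state `q`. -/
def blockOf (q : A.σ) (x : Fin (dd A) → ℕ) : A.Trans → ℕ :=
  fun s => x (ee A (Sum.inl (q, s)))

lemma blockOf_add (q : A.σ) (x y : Fin (dd A) → ℕ) :
    blockOf A q (x + y) = blockOf A q x + blockOf A q y := rfl

/-- The accepting set of the affine Parikh automaton. -/
def Eset (C : Set (A.Trans → ℕ)) : Set (Fin (dd A) → ℕ) :=
  {x | ([] ∈ EpsCALang A C ∧ x = 0) ∨
    ∃ q ∈ A.accept, x (ee A (Sum.inr q)) = 1 ∧ blockOf A q x ∈ C}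

def liftB0 (q : A.σ) (p : A.Trans → ℕ) : idx A → ℕ := fun i =>
  match i with
  | Sum.inl (q₂, s) => if q₂ = q then p s else 0
  | Sum.inr _ => 0

/-- Lifting of a block vector. -/
def liftB (q : A.σ) (p : A.Trans → ℕ) : Fin (dd A) → ℕ := fun j =>
  liftB0 A q p ((ee A).symm j)

def cbase0 (q : A.σ) (c : A.Trans → ℕ) : idx A → ℕ := fun i =>
  match i with
  | Sum.inl (q₂, s) => if q₂ = q then c s else 0
  | Sum.inr q₂ => if q₂ = q then 1 else 0

/-- Base vector: `c` on the block of `q`, `1` on the flag of `q`. -/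
def cbase (q : A.σ) (c : A.Trans → ℕ) : Fin (dd A) → ℕ := fun j =>
  cbase0 A q c ((ee A).symm j)

/-- Coordinates not concerning `q`. -/
def goodI (q : A.σ) : idx A → Prop := fun i =>
  match i with
  | Sum.inl (q₂, _) => q₂ ≠ q
  | Sum.inr q₂ => q₂ ≠ q

def goodJ (q : A.σ) : Set (Fin (dd A)) := {j | goodI A q ((ee A).symm j)}

lemma liftB_inl (q : A.σ) (p : A.Trans → ℕ) (q₂ : A.σ) (s : A.Trans) :
    liftB A q p (ee A (Sum.inl (q₂, s))) = if q₂ = q then p s else 0 := by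
  unfold liftB; rw [Equiv.symm_apply_apply]; rfl

lemma liftB_inr (q : A.σ) (p : A.Trans → ℕ) (q₂ : A.σ) :
    liftB A q p (ee A (Sum.inr q₂)) = 0 := by
  unfold liftB; rw [Equiv.symm_apply_apply]; rfl

lemma cbase_inl (q : A.σ) (c : A.Trans → ℕ) (q₂ : A.σ) (s : A.Trans) :
    cbase A q c (ee A (Sum.inl (q₂, s))) = if q₂ = q then c s else 0 := by
  unfold cbase; rw [Equiv.symm_apply_apply]; rfl

lemma cbase_inr (q : A.σ) (c : A.Trans → ℕ) (q₂ : A.σ) :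
    cbase A q c (ee A (Sum.inr q₂)) = if q₂ = q then 1 else 0 := by
  unfold cbase; rw [Equiv.symm_apply_apply]; rfl

lemma liftB0_add (q : A.σ) (p p' : A.Trans → ℕ) (i : idx A) :
    liftB0 A q (p + p') i = liftB0 A q p i + liftB0 A q p' i := by
  rcases i with ⟨q₂, s⟩ | q₂
  · show (if q₂ = q then (p + p') s else 0) =
      (if q₂ = q then p s else 0) + (if q₂ = q then p' s else 0)
    split <;> simp
  · show (0 : ℕ) = 0 + 0
    simp

lemma liftB_add (q : A.σ) (p p' : A.Trans → ℕ) :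
    liftB A q (p + p') = liftB A q p + liftB A q p' := by
  funext j
  exact liftB0_add A q p p' _

lemma liftB0_zero (q : A.σ) (i : idx A) : liftB0 A q 0 i = 0 := by
  rcases i with ⟨q₂, s⟩ | q₂
  · show (if q₂ = q then (0 : A.Trans → ℕ) s else 0) = 0
    split <;> rfl
  · rfl

lemma liftB_zero (q : A.σ) : liftB A q 0 = 0 := by
  funext j
  exact liftB0_zero A q _

lemma not_goodJ_inl (q : A.σ) (s : A.Trans) : ee A (Sum.inl (q, s)) ∉ goodJ A q := by
  intro h
  have h' : goodI A q ((ee A).symm (ee A (Sum.inl (q, s)))) := h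
  rw [Equiv.symm_apply_apply] at h'
  exact h' rfl

lemma not_goodJ_inr (q : A.σ) : ee A (Sum.inr q) ∉ goodJ A q := by
  intro h
  have h' : goodI A q ((ee A).symm (ee A (Sum.inr q))) := h
  rw [Equiv.symm_apply_apply] at h'
  exact h' rfl

lemma goodJ_inl (q q₂ : A.σ) (s : A.Trans) (h : q₂ ≠ q) :
    ee A (Sum.inl (q₂, s)) ∈ goodJ A q :=
  show goodI A q ((ee A).symm (ee A (Sum.inl (q₂, s)))) by
    rw [Equiv.symm_apply_apply]; exact h

lemma goodJ_inr (q q₂ : A.σ) (h : q₂ ≠ q) : ee A (Sum.inr q₂) ∈ goodJ A q :=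
  show goodI A q ((ee A).symm (ee A (Sum.inr q₂))) by
    rw [Equiv.symm_apply_apply]; exact h

/-- Generators of the monoid of the lifted linear set. -/
def liftP (q : A.σ) (P : Set (A.Trans → ℕ)) : Set (Fin (dd A) → ℕ) :=
  liftB A q '' P ∪ (fun j => (Pi.single j 1 : Fin (dd A) → ℕ)) '' goodJ A q

lemma single_ne_zero_coord (j j' : Fin (dd A)) (hne : j' ≠ j) :
    (Pi.single j 1 : Fin (dd A) → ℕ) j' = 0 := by
  rw [Pi.single_apply, if_neg hne]

lemma closure_liftP_spec (q : A.σ) (P : Set (A.Trans → ℕ)) (p : Fin (dd A) → ℕ)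
    (hp : p ∈ AddSubmonoid.closure (liftP A q P)) :
    p (ee A (Sum.inr q)) = 0 ∧ blockOf A q p ∈ AddSubmonoid.closure P := by
  induction hp using AddSubmonoid.closure_induction with
  | mem g hg =>
    rcases hg with ⟨p₀, hp₀, rfl⟩ | ⟨j, hj, rfl⟩
    · refine ⟨liftB_inr A q p₀ q, ?_⟩
      have hb : blockOf A q (liftB A q p₀) = p₀ := by
        funext s
        rw [blockOf, liftB_inl, if_pos rfl]
      rw [hb]
      exact AddSubmonoid.subset_closure hp₀
    · constructor
      · exact single_ne_zero_coord A j _ (fun he => not_goodJ_inr A q (he ▸ hj))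
      · have hb : blockOf A q (Pi.single j 1 : Fin (dd A) → ℕ) = 0 := by
          funext s
          exact single_ne_zero_coord A j _ (fun he => not_goodJ_inl A q s (he ▸ hj))
        rw [hb]
        exact AddSubmonoid.zero_mem _
  | zero => exact ⟨rfl, AddSubmonoid.zero_mem _⟩
  | add x y hx hy ihx ihy =>
    refine ⟨?_, ?_⟩
    · show x (ee A (Sum.inr q)) + y (ee A (Sum.inr q)) = 0
      rw [ihx.1, ihy.1]
    · rw [blockOf_add]
      exact AddSubmonoid.add_mem _ ihx.2 ihy.2

lemma liftB_mem_closure (q : A.σ) (P : Set (A.Trans → ℕ)) (p : A.Trans → ℕ)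
    (hp : p ∈ AddSubmonoid.closure P) :
    liftB A q p ∈ AddSubmonoid.closure (liftP A q P) := by
  induction hp using AddSubmonoid.closure_induction with
  | mem g hg => exact AddSubmonoid.subset_closure (Or.inl ⟨g, hg, rfl⟩)
  | zero => rw [liftB_zero]; exact AddSubmonoid.zero_mem _
  | add x y hx hy ihx ihy => rw [liftB_add]; exact AddSubmonoid.add_mem _ ihx ihy

/-- The residual vector on coordinates not concerning `q`. -/
def restv (q : A.σ) (x : Fin (dd A) → ℕ) : Fin (dd A) → ℕ :=
  fun j => if j ∈ goodJ A q then x j else 0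

lemma rest_mem_closure (q : A.σ) (P : Set (A.Trans → ℕ)) (x : Fin (dd A) → ℕ) :
    restv A q x ∈ AddSubmonoid.closure (liftP A q P) := by
  have hsum : restv A q x =
      ∑ j : Fin (dd A), (Pi.single j (restv A q x j) : Fin (dd A) → ℕ) := by
    funext i
    rw [Finset.sum_apply]
    exact (Fintype.sum_pi_single i (restv A q x)).symm
  rw [hsum]
  refine AddSubmonoid.sum_mem _ fun j _ => ?_
  by_cases hj : j ∈ goodJ A q
  · have hone : (Pi.single j (restv A q x j) : Fin (dd A) → ℕ) =
        restv A q x j • (Pi.single j 1 : Fin (dd A) → ℕ) := by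
      funext i
      rw [Pi.smul_apply, Pi.single_apply, Pi.single_apply]
      split <;> simp
    rw [hone]
    have hmem : (Pi.single j 1 : Fin (dd A) → ℕ) ∈ liftP A q P :=
      Set.mem_union_right _ ⟨j, hj, rfl⟩
    exact AddSubmonoid.nsmul_mem _ (AddSubmonoid.subset_closure hmem) _
  · have hz : restv A q x j = 0 := if_neg hj
    rw [hz, Pi.single_zero]
    exact AddSubmonoid.zero_mem _

/-- Lifting a linear set on blocks to a linear set on all counters. -/
lemma lift_linear (q : A.σ) (D : Set (A.Trans → ℕ)) (hD : IsLinearSetNat D) :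
    IsLinearSetNat {x : Fin (dd A) → ℕ |
      x (ee A (Sum.inr q)) = 1 ∧ blockOf A q x ∈ D} := by
  obtain ⟨c, P, hPfin, rfl⟩ := hD
  refine ⟨cbase A q c, liftP A q P,
    Set.Finite.union (hPfin.image _) ((Set.toFinite _).image _), ?_⟩
  ext x
  constructor
  · rintro ⟨hflag, p₀, hp₀, hblk⟩
    refine ⟨liftB A q p₀ + restv A q x,
      AddSubmonoid.add_mem _ (liftB_mem_closure A q P p₀ hp₀)
        (rest_mem_closure A q P x), ?_⟩
    funext j
    obtain ⟨i, rfl⟩ : ∃ i, j = ee A i := ⟨(ee A).symm j, ((ee A).apply_symm_apply j).symm⟩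
    show x (ee A i) = cbase A q c (ee A i) + (liftB A q p₀ (ee A i) + restv A q x (ee A i))
    rcases i with ⟨q₂, s⟩ | q₂
    · by_cases hq₂ : q₂ = q
      · subst hq₂
        rw [cbase_inl, if_pos rfl, liftB_inl, if_pos rfl, restv,
          if_neg (not_goodJ_inl A q₂ s)]
        have hc := congrFun hblk s
        rw [blockOf] at hc
        rw [hc]
        rfl
      · rw [cbase_inl, if_neg hq₂, liftB_inl, if_neg hq₂, restv,
          if_pos (goodJ_inl A q q₂ s hq₂)]
        simp
    · by_cases hq₂ : q₂ = q
      · subst hq₂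
        rw [cbase_inr, if_pos rfl, liftB_inr, restv, if_neg (not_goodJ_inr A q₂), hflag]
      · rw [cbase_inr, if_neg hq₂, liftB_inr, restv, if_pos (goodJ_inr A q q₂ hq₂)]
        simp
  · rintro ⟨p, hp, rfl⟩
    obtain ⟨hz, hblk⟩ := closure_liftP_spec A q P p hp
    constructor
    · show cbase A q c (ee A (Sum.inr q)) + p (ee A (Sum.inr q)) = 1
      rw [cbase_inr, if_pos rfl, hz]
    · refine ⟨blockOf A q p, hblk, ?_⟩
      funext s
      show cbase A q c (ee A (Sum.inl (q, s))) + p (ee A (Sum.inl (q, s))) = _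
      rw [cbase_inl, if_pos rfl]
      rfl

lemma singleton_zero_linear :
    IsLinearSetNat ({0} : Set (Fin (dd A) → ℕ)) := by
  refine ⟨0, ∅, Set.finite_empty, ?_⟩
  ext x
  simp [AddSubmonoid.closure_empty, AddSubmonoid.mem_bot]

lemma Eset_semilinear (C : Set (A.Trans → ℕ)) (hC : IsSemilinearSetNat C) :
    IsSemilinearSetNat (Eset A C) := by
  obtain ⟨SC, hSCfin, hSClin, rfl⟩ := hC
  set C := ⋃₀ SC with hCeq
  refine ⟨(if [] ∈ EpsCALang A C then {{(0 : Fin (dd A) → ℕ)}} else ∅) ∪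
    ((fun p : A.σ × Set (A.Trans → ℕ) =>
      {x : Fin (dd A) → ℕ | x (ee A (Sum.inr p.1)) = 1 ∧ blockOf A p.1 x ∈ p.2}) ''
      ({q | q ∈ A.accept} ×ˢ SC)), ?_, ?_, ?_⟩
  · refine Set.Finite.union ?_ (Set.Finite.image _ ((Set.toFinite _).prod hSCfin))
    split <;> simp
  · rintro D hD
    rcases (Set.mem_union _ _ _).mp hD with hD | ⟨⟨q, D'⟩, ⟨hq, hD'⟩, rfl⟩
    · by_cases hmem : [] ∈ EpsCALang A C
      · rw [if_pos hmem] at hD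
        rw [Set.mem_singleton_iff.mp hD]
        exact singleton_zero_linear A
      · rw [if_neg hmem] at hD
        exact absurd hD (Set.notMem_empty D)
    · exact lift_linear A q D' (hSClin D' hD')
  · ext x
    simp only [Eset, Set.mem_setOf_eq, Set.mem_sUnion]
    constructor
    · rintro (⟨hmem, rfl⟩ | ⟨q, hq, hflag, hblk⟩)
      · exact ⟨{0}, Set.mem_union_left _ (by rw [if_pos hmem]; rfl), rfl⟩
      · obtain ⟨D', hD', hxD'⟩ := Set.mem_sUnion.mp hblk
        exact ⟨_, Set.mem_union_right _ ⟨(q, D'), ⟨hq, hD'⟩, rfl⟩, hflag, hxD'⟩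
    · rintro ⟨Z, hZ, hx⟩
      rcases (Set.mem_union _ _ _).mp hZ with hZ1 | ⟨⟨q, D'⟩, ⟨hq, hD'⟩, rfl⟩
      · by_cases hmem : [] ∈ EpsCALang A C
        · rw [if_pos hmem] at hZ1
          rw [Set.mem_singleton_iff.mp hZ1] at hx
          exact Or.inl ⟨hmem, hx⟩
        · rw [if_neg hmem] at hZ1
          exact absurd hZ1 (Set.notMem_empty Z)
      · exact Or.inr ⟨q, hq, hx.1, Set.mem_sUnion.mpr ⟨D', hD', hx.2⟩⟩

end Accept
section Main

set_option linter.unusedSectionVars false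

variable [Fintype α]

lemma xvec_nil : xvec A [] = 0 := rfl

lemma main_lang_eq (C : Set (A.Trans → ℕ))
    (hcd : ∀ π₁ π₂, π₁ ∈ A.Run → π₂ ∈ A.Run →
      π₁.filterMap FinAut.lbl = π₂.filterMap FinAut.lbl →
      (FinAut.pathCount π₁ ∈ C ↔ FinAut.pathCount π₂ ∈ C)) :
    APALang (detAut A) (Mmat A) (vvec A) (Eset A C) = EpsCALang A C := by
  ext w
  constructor
  · rintro ⟨π, ⟨f, hf, hst⟩, hE, rfl⟩
    obtain ⟨hπ, hfst⟩ := path_unique A hst [] rfl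
    have hxe : pathApply (detAut A) (Mmat A) (vvec A) π 0
        = xvec A (π.map FinAut.lbl) := by
      conv_lhs => rw [hπ]
      rfl
    rw [hxe] at hE
    simp only [List.nil_append] at hfst
    set w := π.map FinAut.lbl with hw
    rcases hE with ⟨hmem, hx0⟩ | ⟨q, hqacc, hflag, hblk⟩
    · have hwnil : w = [] := by
        by_contra hne
        rw [hfst] at hf
        obtain ⟨q, hq2, hqacc⟩ := hf
        rw [stt_snd] at hq2
        have h1 := (invariant A w hne).1 q
        rw [if_pos hq2, hx0] at h1
        simp at h1
      rw [hwnil]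
      exact hmem
    · have hwne : w ≠ [] := by
        intro hnil
        rw [hnil, xvec_nil] at hflag
        simp at hflag
      obtain ⟨ihf, ihb⟩ := invariant A w hwne
      have hqmem : q ∈ reachW A w := by
        by_contra hq
        rw [ihf q, if_neg hq] at hflag
        exact absurd hflag (by simp)
      obtain ⟨ρ, hρs, hρl, hρc⟩ := ihb q hqmem
      refine ⟨ρ, ⟨q, hqacc, hρs⟩, ?_, hρl.symm⟩
      have hpc : FinAut.pathCount ρ = blockOf A q (xvec A w) :=
        funext fun s => (hρc s).symm
      rw [hpc]
      exact hblk
  · rintro ⟨π₀, ⟨qf, hqfacc, hs₀⟩, hcount, rfl⟩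
    set w := π₀.filterMap FinAut.lbl with hw
    refine ⟨runFrom A [] w, ⟨stt A w, ⟨qf, ?_, hqfacc⟩, ?_⟩, ?_, (runFrom_lbl A w []).symm⟩
    · rw [stt_snd]
      exact ⟨π₀, hs₀, hw.symm⟩
    · rw [show (detAut A).init = stt A [] from (stt_nil A).symm]
      simpa using runFrom_steps A w []
    · show xvec A w ∈ Eset A C
      show ([] ∈ EpsCALang A C ∧ xvec A w = 0) ∨
        ∃ q ∈ A.accept, xvec A w (ee A (Sum.inr q)) = 1 ∧ blockOf A q (xvec A w) ∈ C
      rcases eq_or_ne w [] with hnil | hwne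
      · refine Or.inl ⟨⟨π₀, ⟨qf, hqfacc, hs₀⟩, hcount, by rw [← hw, hnil]⟩, ?_⟩
        rw [hnil, xvec_nil]
      · right
        have hqm : qf ∈ reachW A w := ⟨π₀, hs₀, hw.symm⟩
        obtain ⟨ihf, ihb⟩ := invariant A w hwne
        obtain ⟨ρ, hρs, hρl, hρc⟩ := ihb qf hqm
        have hCρ : FinAut.pathCount ρ ∈ C :=
          (hcd π₀ ρ ⟨qf, hqfacc, hs₀⟩ ⟨qf, hqfacc, hρs⟩ (by rw [hρl, hw])).mp hcount
        refine ⟨qf, hqfacc, ?_, ?_⟩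
        · rw [ihf qf, if_pos hqm]
        · have hpc : blockOf A qf (xvec A w) = FinAut.pathCount ρ :=
            funext fun s => hρc s
          rw [hpc]
          exact hCρ

end Main
end Aux

/-- An ε-constrained automaton with the constraint-determinism
property can be simulated by a deterministic affine Parikh automaton with a
finite matrix monoid, preserving the language of the underlying automaton. -/
theorem constraintDet_epsCA_to_detAPA {α : Type} [Fintype α]
    (A : FinAut (Option α)) (C : Set (A.Trans → ℕ)) (hC : IsSemilinearSetNat C)
    (hcd : ∀ π₁ π₂, π₁ ∈ A.Run → π₂ ∈ A.Run →
      π₁.filterMap FinAut.lbl = π₂.filterMap FinAut.lbl →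
      (FinAut.pathCount π₁ ∈ C ↔ FinAut.pathCount π₂ ∈ C)) :
    ∃ (d : ℕ) (A' : FinAut α) (M : A'.Trans → Matrix (Fin d) (Fin d) ℕ)
      (v : A'.Trans → Fin d → ℕ) (E : Set (Fin d → ℕ)),
      A'.Deterministic ∧ IsSemilinearSetNat E ∧
      APALang A' M v E = EpsCALang A C ∧
      A'.lang = epsLang A ∧
      (APAMonoid A' M).Finite := by
  exact ⟨dd A, detAut A, Mmat A, vvec A, Eset A C, detAut_deterministic A,
    Eset_semilinear A C hC, main_lang_eq A C hcd, detAut_lang A, monoid_finite A⟩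
end
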